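/- arXiv:1910.11324 — 2 statements merged into one kernel-verified Lean document; each statement's English description precedes it below -/
import Mathlib

section
/- Let γ > 0 be real, let S₁, S₂ ⊆ ℤ be finite intervals of integers, and set Y := S₁ ∪ S₂ and X := (S₁+S₁) ∪ (S₂+S₂). Let C ⊆ X and D ⊆ Y. If |D| ≥ (1+4γ)|Y| − |C|/2, then there are at least γ²·|D|² pairs (b₁,b₂) ∈ D × D such that b₁ + b₂ ∈ C. -/
open Pointwise

/-- An arithmetic progression of integers (as a finite set). -/
def IsAP (P : Finset ℤ) : Prop :=
  ∃ a d : ℤ, ∃ L : ℕ, P = (Finset.range L).image (fun j : ℕ => a + (j : ℤ) * d)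

/-- `Λ(n,k)`: the family of sets `A ⊆ [n] = {1,…,n}` with `|A| = k` and `|A+A| ≤ λk`. -/
def Lambda (lam : ℝ) (n k : ℕ) : Set (Finset ℤ) :=
  {A | A ⊆ Finset.Icc 1 (n : ℤ) ∧ A.card = k ∧ ((A + A).card : ℝ) ≤ lam * k}

/-- `c(λ,ε) = 2^20 λ^2 log(1/ε) + 2^560 λ^32`. -/
noncomputable def cConst (lam ε : ℝ) : ℝ :=
  2 ^ 20 * lam ^ 2 * Real.log (1 / ε) + 2 ^ 560 * lam ^ 32

/-- `δ = 2⁻³² λ⁻³`. -/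
noncomputable def deltaConst (lam : ℝ) : ℝ := (2 : ℝ) ^ (-32 : ℤ) * lam ^ (-3 : ℤ)

/-- `f(λ) = 2^10 λ^3`. -/
noncomputable def fConst (lam : ℝ) : ℝ := 2 ^ 10 * lam ^ 3

/-- The maximum of a finite set of integers (0 for the empty set). -/
def maxI (A : Finset ℤ) : ℤ := WithBot.unbotD 0 A.max

/-- The minimum of a finite set of integers (0 for the empty set). -/
def minI (A : Finset ℤ) : ℤ := WithTop.untopD 0 A.min

/-- `Λ*(n,k)`: the sets in `Λ(n,k)` contained in an arithmetic progression of
length at most `λk/2 + c(λ,ε)`. -/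
noncomputable def LambdaStar (lam ε : ℝ) (n k : ℕ) : Set (Finset ℤ) :=
  {A ∈ Lambda lam n k |
    ∃ P : Finset ℤ, IsAP P ∧ A ⊆ P ∧ (P.card : ℝ) ≤ lam * k / 2 + cConst lam ε}

/-- The family `ℐ` (here `K` denotes the natural number `λk/2`):
sets `A ⊆ {−λk/2, …, λk}` with `|A| = k`, `|A+A| ≤ λk`, `b(A) ≤ δk`,
`r(A) ≥ c(λ,ε)`, and `{x ∈ A : x ≤ 0}`, `{x ∈ A : x > λk/2}` non-empty. -/
noncomputable def Ical (lam ε : ℝ) (k K : ℕ) : Set (Finset ℤ) :=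
  {A | A ⊆ Finset.Icc (-(K : ℤ)) (2 * (K : ℤ)) ∧ A.card = k ∧
    ((A + A).card : ℝ) ≤ lam * k ∧
    ((A \ Finset.Icc 1 (K : ℤ)).card : ℝ) ≤ deltaConst lam * k ∧
    cConst lam ε ≤ (maxI A : ℝ) - (minI A : ℝ) - lam * k / 2 ∧
    (A.filter fun x => x ≤ 0).Nonempty ∧
    (A.filter fun x => (K : ℤ) < x).Nonempty}

/-- The family `ℱ`: sets `A ∈ Λ(n,k)` contained in `{a + jd : −λk/2 ≤ j ≤ λk}`
with all but at most `δk` elements in `{a + jd : 1 ≤ j ≤ λk/2}`. -/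
noncomputable def Fcal (lam : ℝ) (n k K : ℕ) : Set (Finset ℤ) :=
  {A ∈ Lambda lam n k | ∃ a d : ℤ,
    A ⊆ (Finset.Icc (-(K : ℤ)) (2 * (K : ℤ))).image (fun j => a + j * d) ∧
    ((A \ (Finset.Icc (1 : ℤ) (K : ℤ)).image (fun j => a + j * d)).card : ℝ) ≤
      deltaConst lam * k}

/-- Number of ordered representations of `s` as a sum from `A × B`. -/
def st4rct (A B : Finset ℤ) (s : ℤ) : ℕ :=
  ((A ×ˢ B).filter fun p => p.1 + p.2 = s).card

lemma st4rct_le_left (A B : Finset ℤ) (s : ℤ) : st4rct A B s ≤ A.card := by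
  apply Finset.card_le_card_of_injOn (fun p => p.1)
  · intro p hp
    exact (Finset.mem_product.mp (Finset.mem_filter.mp hp).1).1
  · intro p hp q hq h
    simp only [Finset.coe_filter, Set.mem_setOf_eq] at hp hq
    obtain ⟨-, hp2⟩ := hp
    obtain ⟨-, hq2⟩ := hq
    have : p.2 = q.2 := by linarith
    exact Prod.ext h this

lemma st4rct_sum (A B : Finset ℤ) : ∑ s ∈ A + B, st4rct A B s = A.card * B.card := by
  rw [← Finset.card_product]
  exact (Finset.card_eq_sum_card_fiberwise (f := fun p : ℤ × ℤ => p.1 + p.2)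
    (fun p hp => by
      rw [Finset.mem_coe, Finset.mem_product] at hp
      exact Finset.add_mem_add hp.1 hp.2)).symm

lemma st4rct_mono (A' A B : Finset ℤ) (h : A' ⊆ A) (s : ℤ) : st4rct A' B s ≤ st4rct A B s :=
  Finset.card_le_card (Finset.filter_subset_filter _ (Finset.product_subset_product h le_rfl))

/-- Existence of the "top `t`" elements of a finite set of integers. -/
lemma st4top : ∀ (t : ℕ) (B : Finset ℤ), t ≤ B.card →
    ∃ B' : Finset ℤ, B' ⊆ B ∧ B'.card = t ∧ ∀ x ∈ B, x ∉ B' → ∀ y ∈ B', x < y := by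
  intro t
  induction t with
  | zero => exact fun B _ => ⟨∅, by simp, by simp, by simp⟩
  | succ n ih =>
    intro B hB
    obtain ⟨B', hsub, hcard, htop⟩ := ih B (Nat.le_of_succ_le hB)
    have hne : (B \ B').Nonempty := by
      rw [← Finset.card_pos, Finset.card_sdiff_of_subset hsub]; omega
    set μ := (B \ B').max' hne with hμdef
    have hμmem : μ ∈ B \ B' := Finset.max'_mem _ hne
    rw [Finset.mem_sdiff] at hμmem
    refine ⟨insert μ B', ?_, ?_, ?_⟩
    · exact Finset.insert_subset hμmem.1 hsub
    · rw [Finset.card_insert_of_notMem hμmem.2, hcard]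
    · intro x hx hxn y hy
      rcases Finset.mem_insert.mp hy with rfl | hyB'
      · have hxs : x ∈ B \ B' := by
          rw [Finset.mem_sdiff]
          exact ⟨hx, fun hxB' => hxn (Finset.mem_insert_of_mem hxB')⟩
        have hle := Finset.le_max' _ x hxs
        have hxy : x ≠ μ := fun h => hxn (h ▸ Finset.mem_insert_self _ _)
        omega
      · exact htop x hx (fun hxB' => hxn (Finset.mem_insert_of_mem hxB')) y hyB'

/-- Pollard's inequality over the integers, auxiliary version. -/
lemma st4pollard_aux (t : ℕ) : ∀ (k : ℕ) (A B : Finset ℤ), A.card = t + k → t ≤ B.card →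
    t * (A.card + B.card - t) ≤ ∑ s ∈ A + B, min (st4rct A B s) t := by
  intro k
  induction k with
  | zero =>
    intro A B hA hB
    have h1 : ∀ s ∈ A + B, min (st4rct A B s) t = st4rct A B s := fun s _ =>
      min_eq_left (by rw [← Nat.add_zero t, ← hA]; exact st4rct_le_left A B s)
    rw [Finset.sum_congr rfl h1, st4rct_sum, hA]
    have e : t + 0 + B.card - t = B.card := by omega
    rw [e]
    simp
  | succ n ih =>
    intro A B hA hB
    have hAne : A.Nonempty := Finset.card_pos.mp (by omega)
    set α := A.max' hAne with hαdef
    set A' := A.erase α with hA'def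
    have hαA : α ∈ A := A.max'_mem hAne
    have hA'card : A'.card = t + n := by
      rw [hA'def, Finset.card_erase_of_mem hαA]; omega
    have IH := ih A' B hA'card hB
    obtain ⟨B', hB'B, hB'card, htop⟩ := st4top t B hB
    set T := B'.image (fun b => α + b) with hTdef
    have hTcard : T.card = t := by
      rw [hTdef, Finset.card_image_of_injective _ (add_right_injective α), hB'card]
    have hTsub : T ⊆ A + B := by
      intro x hx
      rw [hTdef, Finset.mem_image] at hx
      obtain ⟨b, hb, rfl⟩ := hx
      exact Finset.add_mem_add hαA (hB'B hb)
    have hA'A : A' ⊆ A := Finset.erase_subset _ _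
    -- key claim on the t top sums
    have hkey : ∀ s ∈ T, min (st4rct A' B s) t + 1 ≤ min (st4rct A B s) t := by
      intro s hs
      rw [hTdef, Finset.mem_image] at hs
      obtain ⟨b, hbB', rfl⟩ := hs
      have ht1 : 1 ≤ t := by
        have : B'.Nonempty := ⟨b, hbB'⟩
        have := Finset.card_pos.mpr this
        omega
      -- (i) few representations in A' × B
      have h2 : st4rct A' B (α + b) < t := by
        have hle : st4rct A' B (α + b) ≤ (B'.erase b).card := by
          apply Finset.card_le_card_of_injOn (fun p => p.2)
          · intro p hp
            rw [Finset.mem_coe, Finset.mem_filter, Finset.mem_product] at hp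
            obtain ⟨⟨hp1, hp2⟩, hps⟩ := hp
            have hp1A : p.1 ∈ A := hA'A hp1
            have hlt : p.1 < α := lt_of_le_of_ne (A.le_max' _ hp1A) (Finset.ne_of_mem_erase hp1)
            have hgt : b < p.2 := by omega
            rw [Finset.mem_coe, Finset.mem_erase]; beta_reduce
            refine ⟨by omega, ?_⟩
            by_contra hnB'
            have := htop p.2 hp2 hnB' b hbB'
            omega
          · intro p hp q hq h
            simp only [Finset.coe_filter, Set.mem_setOf_eq] at hp hq
            obtain ⟨-, hp2⟩ := hp
            obtain ⟨-, hq2⟩ := hq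
            have : p.1 = q.1 := by linarith
            exact Prod.ext this h
        rw [Finset.card_erase_of_mem hbB', hB'card] at hle
        omega
      -- (ii) one more representation in A × B
      have h3 : st4rct A' B (α + b) + 1 ≤ st4rct A B (α + b) := by
        have hnm : (α, b) ∉ (A' ×ˢ B).filter fun p => p.1 + p.2 = α + b := by
          rw [Finset.mem_filter, Finset.mem_product]
          intro h
          exact (Finset.notMem_erase α A) h.1.1
        have hsub : insert (α, b) ((A' ×ˢ B).filter fun p => p.1 + p.2 = α + b) ⊆
            (A ×ˢ B).filter fun p => p.1 + p.2 = α + b := by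
          intro p hp
          rcases Finset.mem_insert.mp hp with rfl | hp
          · rw [Finset.mem_filter, Finset.mem_product]
            exact ⟨⟨hαA, hB'B hbB'⟩, rfl⟩
          · exact Finset.filter_subset_filter _ (Finset.product_subset_product hA'A le_rfl) hp
        have := Finset.card_le_card hsub
        rw [Finset.card_insert_of_notMem hnm] at this
        exact this
      have e1 : min (st4rct A' B (α + b)) t = st4rct A' B (α + b) := min_eq_left h2.le
      rw [e1]
      exact le_min h3 (by omega)
    -- assembly
    have hU : (A' + B) ∪ T ⊆ A + B :=
      Finset.union_subset (Finset.add_subset_add hA'A le_rfl) hTsub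
    have step1 : ∑ s ∈ (A' + B) ∪ T, min (st4rct A B s) t ≤ ∑ s ∈ A + B, min (st4rct A B s) t :=
      Finset.sum_le_sum_of_subset hU
    have step2 : ∑ s ∈ (A' + B) ∪ T, (min (st4rct A' B s) t + if s ∈ T then 1 else 0) ≤
        ∑ s ∈ (A' + B) ∪ T, min (st4rct A B s) t := by
      apply Finset.sum_le_sum
      intro s _
      by_cases hsT : s ∈ T
      · simpa [hsT] using hkey s hsT
      · simpa [hsT] using min_le_min (st4rct_mono A' A B hA'A s) le_rfl
    rw [Finset.sum_add_distrib, Finset.sum_ite_mem,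
      Finset.inter_eq_right.mpr Finset.subset_union_right, Finset.sum_const, hTcard,
      smul_eq_mul, mul_one] at step2
    have step3 : ∑ s ∈ A' + B, min (st4rct A' B s) t ≤
        ∑ s ∈ (A' + B) ∪ T, min (st4rct A' B s) t :=
      Finset.sum_le_sum_of_subset Finset.subset_union_left
    have e2 : A.card + B.card - t = (A'.card + B.card - t) + 1 := by omega
    rw [e2, Nat.mul_add, Nat.mul_one]
    omega

/-- Pollard's inequality over the integers. -/
lemma st4pollard (t : ℕ) (A B : Finset ℤ) (hA : t ≤ A.card) (hB : t ≤ B.card) :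
    t * (A.card + B.card - t) ≤ ∑ s ∈ A + B, min (st4rct A B s) t :=
  st4pollard_aux t (A.card - t) A B (by omega) hB

lemma st4icc_add (a b : ℤ) (hab : a ≤ b) :
    Finset.Icc a b + Finset.Icc a b = Finset.Icc (a + a) (b + b) := by
  ext x
  simp only [Finset.mem_add, Finset.mem_Icc]
  constructor
  · rintro ⟨u, hu, v, hv, rfl⟩; omega
  · intro hx
    exact ⟨max a (x - b), by omega, x - max a (x - b), by omega, by omega⟩

lemma st4good_eq (D C : Finset ℤ) :
    (((D ×ˢ D).filter fun p => p.1 + p.2 ∈ C)).card = ∑ s ∈ C, st4rct D D s := by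
  rw [Finset.card_eq_sum_card_fiberwise (f := fun p : ℤ × ℤ => p.1 + p.2) (t := C)
    (s := (D ×ˢ D).filter fun p => p.1 + p.2 ∈ C)
    (fun p hp => Finset.mem_coe.mpr (Finset.mem_filter.mp (Finset.mem_coe.mp hp)).2)]
  apply Finset.sum_congr rfl
  intro s hs
  rw [Finset.filter_filter]
  unfold st4rct
  congr 1
  apply Finset.filter_congr
  intro p _
  constructor
  · exact fun h => h.2
  · intro h
    refine ⟨?_, h⟩
    show p.1 + p.2 ∈ C
    rw [h]
    exact hs

/-- Supersaturation for one interval. -/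
lemma st4one (a b : ℤ) (hab : a ≤ b) (D C : Finset ℤ)
    (hD : D ⊆ Finset.Icc a b) (hC : C ⊆ Finset.Icc a b + Finset.Icc a b)
    (ε : ℝ) (hε0 : 0 ≤ ε)
    (hε : ε ≤ (D.card : ℝ) + (C.card : ℝ) / 2 - ((Finset.Icc a b).card : ℝ)) :
    ε ^ 2 ≤ ((((D ×ˢ D).filter fun p => p.1 + p.2 ∈ C)).card : ℝ) := by
  have hSS : Finset.Icc a b + Finset.Icc a b = Finset.Icc (a + a) (b + b) := st4icc_add a b hab
  have hy1 : 1 ≤ (Finset.Icc a b).card := Finset.card_pos.mpr (Finset.nonempty_Icc.mpr hab)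
  have hss_card : (Finset.Icc a b + Finset.Icc a b).card = 2 * (Finset.Icc a b).card - 1 := by
    rw [hSS, Int.card_Icc, Int.card_Icc]
    omega
  set y := (Finset.Icc a b).card with hydef
  set d := D.card with hddef
  set m := C.card with hmdef
  have hm : m ≤ 2 * y - 1 := hss_card ▸ Finset.card_le_card hC
  have hmR : (m : ℝ) ≤ 2 * y - 1 := by
    have : ((2 * y - 1 : ℕ) : ℝ) = 2 * (y : ℝ) - 1 := by
      rw [Nat.cast_sub (by omega)]; push_cast; ring
    rw [← this]
    exact_mod_cast hm
  have hεd : ε ≤ (d : ℝ) := by linarith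
  set t := ⌈ε⌉₊ with htdef
  have htd : t ≤ d := Nat.ceil_le.mpr hεd
  have hpol := st4pollard t D D htd htd
  -- good count as a fiberwise sum
  have hgood : (((D ×ˢ D).filter fun p => p.1 + p.2 ∈ C)).card = ∑ s ∈ C, st4rct D D s :=
    st4good_eq D C
  have h1 : ∑ s ∈ C, min (st4rct D D s) t ≤ ∑ s ∈ C, st4rct D D s :=
    Finset.sum_le_sum fun s _ => min_le_left _ _
  -- split the Pollard sum
  have hsplit : ∑ s ∈ D + D, min (st4rct D D s) t ≤
      ∑ s ∈ C, min (st4rct D D s) t + ((D + D) \ C).card * t := by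
    rw [← Finset.sum_inter_add_sum_sdiff (D + D) C (fun s => min (st4rct D D s) t)]
    have ha : ∑ s ∈ (D + D) ∩ C, min (st4rct D D s) t ≤ ∑ s ∈ C, min (st4rct D D s) t :=
      Finset.sum_le_sum_of_subset Finset.inter_subset_right
    have hb : ∑ s ∈ (D + D) \ C, min (st4rct D D s) t ≤ ((D + D) \ C).card * t := by
      have := Finset.sum_le_card_nsmul ((D + D) \ C) (fun s => min (st4rct D D s) t) t
        (fun s _ => min_le_right _ _)
      simpa using this
    omega
  have hsd : ((D + D) \ C).card ≤ (2 * y - 1) - m := by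
    have hsub : (D + D) \ C ⊆ (Finset.Icc a b + Finset.Icc a b) \ C :=
      Finset.sdiff_subset_sdiff (Finset.add_subset_add hD hD) le_rfl
    have := Finset.card_le_card hsub
    rw [Finset.card_sdiff_of_subset hC, hss_card] at this
    exact this
  -- combined natural-number inequality
  have hfinalN : t * (d + d - t) ≤
      (((D ×ˢ D).filter fun p => p.1 + p.2 ∈ C)).card + ((2 * y - 1) - m) * t := by
    rw [hgood]
    calc t * (d + d - t) ≤ ∑ s ∈ D + D, min (st4rct D D s) t := hpol
    _ ≤ ∑ s ∈ C, min (st4rct D D s) t + ((D + D) \ C).card * t := hsplit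
    _ ≤ ∑ s ∈ C, st4rct D D s + ((2 * y - 1) - m) * t := by
        have := Nat.mul_le_mul_right t hsd
        omega
  -- move to the reals
  set u := d + d - t with hu
  set v := 2 * y - 1 - m with hv
  have huR : (u : ℝ) = (d : ℝ) + d - t := by
    have h' : u + t = d + d := by omega
    have := congrArg (Nat.cast : ℕ → ℝ) h'
    push_cast at this
    linarith
  have hvR : (v : ℝ) = 2 * (y : ℝ) - 1 - m := by
    have h' : v + m + 1 = 2 * y := by omega
    have := congrArg (Nat.cast : ℕ → ℝ) h'
    push_cast at this
    linarith
  have hcast : (t : ℝ) * u ≤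
      ((((D ×ˢ D).filter fun p => p.1 + p.2 ∈ C)).card : ℝ) + (v : ℝ) * t := by
    exact_mod_cast hfinalN
  have htε : ε ≤ (t : ℝ) := Nat.le_ceil ε
  have htε2 : (t : ℝ) < ε + 1 := Nat.ceil_lt_add_one hε0
  have hXε : ε ≤ 2 * (d : ℝ) + m + 1 - 2 * y - t := by linarith
  have hmul : ε * ε ≤ (t : ℝ) * (2 * (d : ℝ) + m + 1 - 2 * y - t) :=
    mul_le_mul htε hXε hε0 (le_trans hε0 htε)
  have hring : (t : ℝ) * (2 * (d : ℝ) + m + 1 - 2 * y - t) = (t : ℝ) * u - v * t := by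
    rw [huR, hvR]; ring
  rw [pow_two]
  linarith

/-- Transfer: the good-pair count only grows when passing to supersets. -/
lemma st4sub (a b : ℤ) (D C D' C' : Finset ℤ)
    (hD' : D' ⊆ Finset.Icc a b) (hC' : C' ⊆ Finset.Icc a b + Finset.Icc a b)
    (hDD : D' ⊆ D) (hCC : C' ⊆ C) (ε : ℝ) (hε0 : 0 < ε)
    (hε : ε ≤ (D'.card : ℝ) + (C'.card : ℝ) / 2 - ((Finset.Icc a b).card : ℝ)) :
    ε ^ 2 ≤ ((((D ×ˢ D).filter fun p => p.1 + p.2 ∈ C)).card : ℝ) := by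
  have hab : a ≤ b := by
    by_contra hab
    rw [Finset.Icc_eq_empty (fun h => hab h)] at hD' hC' hε
    rw [Finset.add_empty] at hC'
    rw [Finset.subset_empty.mp hD', Finset.subset_empty.mp hC'] at hε
    simp at hε
    linarith
  have h1 := st4one a b hab D' C' hD' hC' ε hε0.le hε
  have hsub : ((D' ×ˢ D').filter fun p => p.1 + p.2 ∈ C') ⊆
      ((D ×ˢ D).filter fun p => p.1 + p.2 ∈ C) := by
    intro p hp
    rw [Finset.mem_filter, Finset.mem_product] at hp ⊢
    exact ⟨⟨hDD hp.1.1, hDD hp.1.2⟩, hCC hp.2⟩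
  have := Finset.card_le_card hsub
  calc ε ^ 2 ≤ _ := h1
  _ ≤ _ := by exact_mod_cast this

/-- supersaturation for unions of two intervals. -/
theorem statement4 (γ : ℝ) (hγ : 0 < γ)
    (S₁ S₂ : Finset ℤ) (h₁ : ∃ a b : ℤ, S₁ = Finset.Icc a b)
    (h₂ : ∃ a b : ℤ, S₂ = Finset.Icc a b)
    (C D : Finset ℤ) (hC : C ⊆ (S₁ + S₁) ∪ (S₂ + S₂)) (hD : D ⊆ S₁ ∪ S₂)
    (hcard : (1 + 4 * γ) * ((S₁ ∪ S₂).card : ℝ) - (C.card : ℝ) / 2 ≤ (D.card : ℝ)) :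
    γ ^ 2 * (D.card : ℝ) ^ 2 ≤
      ((((D ×ˢ D).filter fun p => p.1 + p.2 ∈ C)).card : ℝ) := by
  obtain ⟨a₁, b₁, rfl⟩ := h₁
  obtain ⟨a₂, b₂, rfl⟩ := h₂
  rcases Finset.eq_empty_or_nonempty D with rfl | hDne
  · simp
  have hYne : (Finset.Icc a₁ b₁ ∪ Finset.Icc a₂ b₂).Nonempty := by
    obtain ⟨x, hx⟩ := hDne
    exact ⟨x, hD hx⟩
  have hy1 : 1 ≤ (Finset.Icc a₁ b₁ ∪ Finset.Icc a₂ b₂).card := Finset.card_pos.mpr hYne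
  have hy1R : (1 : ℝ) ≤ ((Finset.Icc a₁ b₁ ∪ Finset.Icc a₂ b₂).card : ℝ) := by
    exact_mod_cast hy1
  have hdy : D.card ≤ (Finset.Icc a₁ b₁ ∪ Finset.Icc a₂ b₂).card := Finset.card_le_card hD
  have hdyR : (D.card : ℝ) ≤ ((Finset.Icc a₁ b₁ ∪ Finset.Icc a₂ b₂).card : ℝ) := by
    exact_mod_cast hdy
  set yR : ℝ := ((Finset.Icc a₁ b₁ ∪ Finset.Icc a₂ b₂).card : ℝ) with hyRdef
  rcases Finset.eq_empty_or_nonempty (Finset.Icc a₁ b₁ ∩ Finset.Icc a₂ b₂) with hdisj | hint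
  · -- Case B : disjoint intervals
    have hdisj' : Disjoint (Finset.Icc a₁ b₁) (Finset.Icc a₂ b₂) :=
      Finset.disjoint_iff_inter_eq_empty.mpr hdisj
    set D₁ := D ∩ Finset.Icc a₁ b₁ with hD₁
    set D₂ := D ∩ Finset.Icc a₂ b₂ with hD₂
    set C₁ := C ∩ (Finset.Icc a₁ b₁ + Finset.Icc a₁ b₁) with hC₁
    set C₂ := C ∩ (Finset.Icc a₂ b₂ + Finset.Icc a₂ b₂) with hC₂
    have hDu : D₁ ∪ D₂ = D := by
      rw [hD₁, hD₂, ← Finset.inter_union_distrib_left, Finset.inter_eq_left.mpr hD]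
    have hDdisj : Disjoint D₁ D₂ :=
      hdisj'.mono Finset.inter_subset_right Finset.inter_subset_right
    have hdsum : D₁.card + D₂.card = D.card := by
      rw [← Finset.card_union_of_disjoint hDdisj, hDu]
    have hysum : (Finset.Icc a₁ b₁).card + (Finset.Icc a₂ b₂).card =
        (Finset.Icc a₁ b₁ ∪ Finset.Icc a₂ b₂).card :=
      (Finset.card_union_of_disjoint hdisj').symm
    have hmsum : C.card ≤ C₁.card + C₂.card := by
      have : C = C₁ ∪ C₂ := by
        rw [hC₁, hC₂, ← Finset.inter_union_distrib_left, Finset.inter_eq_left.mpr hC]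
      rw [this]
      exact Finset.card_union_le _ _
    have hkey : 2 * γ * yR ≤ (D₁.card : ℝ) + (C₁.card : ℝ) / 2 - ((Finset.Icc a₁ b₁).card : ℝ) ∨
        2 * γ * yR ≤ (D₂.card : ℝ) + (C₂.card : ℝ) / 2 - ((Finset.Icc a₂ b₂).card : ℝ) := by
      by_contra h
      push_neg at h
      obtain ⟨h1, h2⟩ := h
      have c1 : (D₁.card : ℝ) + D₂.card = D.card := by exact_mod_cast hdsum
      have c2 : ((Finset.Icc a₁ b₁).card : ℝ) + (Finset.Icc a₂ b₂).card = yR := by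
        rw [hyRdef]; exact_mod_cast hysum
      have c3 : (C.card : ℝ) ≤ (C₁.card : ℝ) + C₂.card := by exact_mod_cast hmsum
      linarith
    have hε0 : 0 < 2 * γ * yR := by
      have : (0:ℝ) < yR := by linarith
      positivity
    have hfin : (2 * γ * yR) ^ 2 ≤
        ((((D ×ˢ D).filter fun p => p.1 + p.2 ∈ C)).card : ℝ) := by
      rcases hkey with hk | hk
      · exact st4sub a₁ b₁ D C D₁ C₁ Finset.inter_subset_right Finset.inter_subset_right
          Finset.inter_subset_left Finset.inter_subset_left _ hε0 hk
      · exact st4sub a₂ b₂ D C D₂ C₂ Finset.inter_subset_right Finset.inter_subset_right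
          Finset.inter_subset_left Finset.inter_subset_left _ hε0 hk
    have hsq : γ ^ 2 * (D.card : ℝ) ^ 2 ≤ (2 * γ * yR) ^ 2 := by
      have h0 : (0:ℝ) ≤ D.card := Nat.cast_nonneg _
      have hd2 : (D.card : ℝ) ^ 2 ≤ yR ^ 2 := by nlinarith
      have ha : γ ^ 2 * (D.card : ℝ) ^ 2 ≤ γ ^ 2 * yR ^ 2 :=
        mul_le_mul_of_nonneg_left hd2 (sq_nonneg γ)
      nlinarith [sq_nonneg (γ * yR)]
    linarith
  · -- Case A : the two intervals intersect
    obtain ⟨x, hx⟩ := hint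
    rw [Finset.mem_inter, Finset.mem_Icc, Finset.mem_Icc] at hx
    set mn := min a₁ a₂ with hmn
    set mx := max b₁ b₂ with hmx
    have hmnmx : mn ≤ mx := by omega
    have hY : Finset.Icc a₁ b₁ ∪ Finset.Icc a₂ b₂ = Finset.Icc mn mx := by
      ext z
      simp only [Finset.mem_union, Finset.mem_Icc]
      omega
    have hX : (Finset.Icc a₁ b₁ + Finset.Icc a₁ b₁) ∪ (Finset.Icc a₂ b₂ + Finset.Icc a₂ b₂) =
        Finset.Icc mn mx + Finset.Icc mn mx := by
      rw [st4icc_add a₁ b₁ (by omega), st4icc_add a₂ b₂ (by omega), st4icc_add mn mx hmnmx]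
      ext z
      simp only [Finset.mem_union, Finset.mem_Icc]
      omega
    have hD' : D ⊆ Finset.Icc mn mx := hY ▸ hD
    have hC' : C ⊆ Finset.Icc mn mx + Finset.Icc mn mx := hX ▸ hC
    have hycard : ((Finset.Icc mn mx).card : ℝ) = yR := by rw [hyRdef, hY]
    have hε0 : 0 < 4 * γ * yR := by
      have : (0:ℝ) < yR := by linarith
      positivity
    have hεle : 4 * γ * yR ≤ (D.card : ℝ) + (C.card : ℝ) / 2 - ((Finset.Icc mn mx).card : ℝ) := by
      rw [hycard]
      linarith
    have hfin := st4sub mn mx D C D C hD' hC' le_rfl le_rfl (4 * γ * yR) hε0 hεle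
    have hsq : γ ^ 2 * (D.card : ℝ) ^ 2 ≤ (4 * γ * yR) ^ 2 := by
      have h0 : (0:ℝ) ≤ D.card := Nat.cast_nonneg _
      have hd2 : (D.card : ℝ) ^ 2 ≤ yR ^ 2 := by nlinarith
      have ha : γ ^ 2 * (D.card : ℝ) ^ 2 ≤ γ ^ 2 * yR ^ 2 :=
        mul_le_mul_of_nonneg_left hd2 (sq_nonneg γ)
      nlinarith [sq_nonneg (γ * yR)]
    linarith
end

section
/- Let λ ≥ 2³⁰ be real. There exists N ∈ ℕ such that for all n,k ∈ ℕ with n,k ≥ N, λk ≤ n and λk/2 ∈ ℕ, the number of sets A ⊆ [n] with |A| = k and |A+A| ≤ λk is at least exp(2⁻⁸·λ^{1/2})·(n²/k)·binom(λk/2, k). -/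
open Pointwise

section Statement19Aux


lemma my_descFactorial_add (n a b : ℕ) :
    n.descFactorial (a + b) = n.descFactorial a * (n - a).descFactorial b := by
  induction b with
  | zero => simp
  | succ b ih =>
      rw [show a + (b+1) = (a+b)+1 by ring, Nat.descFactorial_succ, ih,
        Nat.descFactorial_succ, Nat.sub_sub]
      ring

/-- Stirling-type upper bound on the factorial. -/
lemma my_factorial_le (s : ℕ) (hs : 1 ≤ s) :
    (Nat.factorial s : ℝ) ≤ Real.exp 1 * s * (s : ℝ) ^ s * Real.exp (-(s : ℝ)) := by
  induction s with
  | zero => omega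
  | succ s ih =>
      rcases Nat.eq_or_lt_of_le hs with h1 | h1
      · have : s = 0 := by omega
        subst this
        have h : Real.exp 1 * Real.exp (-(1:ℝ)) = 1 := by
          rw [← Real.exp_add]; simp
        push_cast
        norm_num
        nlinarith [h]
      · have hs1 : 1 ≤ s := by omega
        have ih' := ih hs1
        have hsp : (0:ℝ) < s := by exact_mod_cast Nat.pos_of_ne_zero (by omega)
        have hE : (0:ℝ) < Real.exp 1 := Real.exp_pos 1
        -- key : e * s^(s+1) ≤ (s+1)^(s+1)
        have key : Real.exp 1 * (s:ℝ) ^ (s+1) ≤ ((s:ℝ)+1) ^ (s+1) := by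
          have h2 : Real.exp (1/((s:ℝ)+1)) * (s:ℝ) ≤ ((s:ℝ)+1) := by
            have h3 : (1 : ℝ) - 1/((s:ℝ)+1) ≤ Real.exp (-(1/((s:ℝ)+1))) := by
              have := Real.add_one_le_exp (-(1/((s:ℝ)+1)))
              linarith
            have hprod : Real.exp (1/((s:ℝ)+1)) * Real.exp (-(1/((s:ℝ)+1))) = 1 := by
              rw [← Real.exp_add]; simp
            have hpos : (0:ℝ) < Real.exp (1/((s:ℝ)+1)) := Real.exp_pos _
            have h6 : Real.exp (1/((s:ℝ)+1)) * (1 - 1/((s:ℝ)+1)) ≤ 1 := by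
              calc Real.exp (1/((s:ℝ)+1)) * (1 - 1/((s:ℝ)+1))
                  ≤ Real.exp (1/((s:ℝ)+1)) * Real.exp (-(1/((s:ℝ)+1))) :=
                    mul_le_mul_of_nonneg_left h3 hpos.le
                _ = 1 := hprod
            have h7 : Real.exp (1/((s:ℝ)+1)) * (1 - 1/((s:ℝ)+1)) * ((s:ℝ)+1) ≤ (s:ℝ)+1 := by
              have := mul_le_mul_of_nonneg_right h6 (by positivity : (0:ℝ) ≤ (s:ℝ)+1)
              linarith
            have h8 : (1 - 1/((s:ℝ)+1)) * ((s:ℝ)+1) = (s:ℝ) := by field_simp; ring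
            have h9 : Real.exp (1/((s:ℝ)+1)) * (s:ℝ)
                = Real.exp (1/((s:ℝ)+1)) * (1 - 1/((s:ℝ)+1)) * ((s:ℝ)+1) := by
              rw [mul_assoc, h8]
            rw [h9]; exact h7
          calc Real.exp 1 * (s:ℝ)^(s+1) = (Real.exp (1/((s:ℝ)+1)) * (s:ℝ)) ^ (s+1) := by
                rw [mul_pow, ← Real.exp_nat_mul]
                push_cast
                rw [mul_one_div, div_self (by positivity)]
            _ ≤ ((s:ℝ)+1) ^ (s+1) := by
                apply pow_le_pow_left₀ (by positivity) h2
        have step : (Nat.factorial (s+1) : ℝ) = ((s:ℝ)+1) * Nat.factorial s := by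
          push_cast [Nat.factorial_succ]; ring
        have hexp : Real.exp (-((s:ℝ)+1)) * Real.exp 1 = Real.exp (-(s:ℝ)) := by
          rw [← Real.exp_add]; ring_nf
        push_cast
        rw [step]
        have goal2 : ((s:ℝ)+1) * (Real.exp 1 * s * (s:ℝ)^s * Real.exp (-(s:ℝ)))
            ≤ Real.exp 1 * ((s:ℝ)+1) * ((s:ℝ)+1)^(s+1) * Real.exp (-((s:ℝ)+1)) := by
          have e1 : Real.exp 1 * (s:ℝ) * (s:ℝ)^s = Real.exp 1 * (s:ℝ)^(s+1) := by
            rw [pow_succ]; ring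
          have := mul_le_mul_of_nonneg_right key (Real.exp_nonneg (-((s:ℝ)+1)))
          calc ((s:ℝ)+1) * (Real.exp 1 * s * (s:ℝ)^s * Real.exp (-(s:ℝ)))
              = ((s:ℝ)+1) * (Real.exp 1 * (s:ℝ)^(s+1)) * (Real.exp (-((s:ℝ)+1)) * Real.exp 1) := by
                rw [hexp, pow_succ]; ring
            _ ≤ ((s:ℝ)+1) * (((s:ℝ)+1)^(s+1)) * (Real.exp (-((s:ℝ)+1)) * Real.exp 1) := by
                have hnn : (0:ℝ) ≤ Real.exp (-((s:ℝ)+1)) * Real.exp 1 := by positivity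
                apply mul_le_mul_of_nonneg_right _ hnn
                apply mul_le_mul_of_nonneg_left key (by positivity)
            _ = Real.exp 1 * ((s:ℝ)+1) * ((s:ℝ)+1)^(s+1) * Real.exp (-((s:ℝ)+1)) := by ring
        calc ((s:ℝ)+1) * (Nat.factorial s : ℝ)
            ≤ ((s:ℝ)+1) * (Real.exp 1 * s * (s:ℝ)^s * Real.exp (-(s:ℝ))) := by
              apply mul_le_mul_of_nonneg_left ih' (by positivity)
          _ ≤ Real.exp 1 * ((s:ℝ)+1) * ((s:ℝ)+1)^(s+1) * Real.exp (-((s:ℝ)+1)) := goal2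
/-- Lower bound for the binomial coefficient. -/
lemma my_choose_lb (T s : ℕ) (hs : 1 ≤ s) (x : ℝ) (hx : 0 ≤ x)
    (h : (s:ℝ) * x + s ≤ (T:ℝ) + 1) :
    x ^ s * Real.exp ((s:ℝ) - 1) / s ≤ (T.choose s : ℝ) := by
  have hs0 : (0:ℝ) < s := by exact_mod_cast hs
  have hsT1 : s ≤ T + 1 := by
    have : (s:ℝ) ≤ (T:ℝ) + 1 := by nlinarith
    exact_mod_cast this
  have hcast : ((T + 1 - s : ℕ) : ℝ) = (T:ℝ) + 1 - s := by
    push_cast [Nat.cast_sub hsT1]; ring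
  have h1 : ((s:ℝ) * x) ^ s ≤ ((T + 1 - s : ℕ) : ℝ) ^ s := by
    apply pow_le_pow_left₀ (by positivity)
    rw [hcast]; linarith
  have h2 : ((T + 1 - s : ℕ) : ℝ) ^ s ≤ (T.descFactorial s : ℝ) := by
    exact_mod_cast Nat.pow_sub_le_descFactorial T s
  have h3 : (T.descFactorial s : ℝ) = (Nat.factorial s : ℝ) * (T.choose s : ℝ) := by
    exact_mod_cast Nat.descFactorial_eq_factorial_mul_choose T s
  have hC : (0:ℝ) ≤ (T.choose s : ℝ) := by positivity
  have h4 := my_factorial_le s hs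
  have h6 : (s:ℝ)^s * x^s ≤ (T.choose s : ℝ) * (Real.exp 1 * s * (s:ℝ)^s * Real.exp (-(s:ℝ))) := by
    calc (s:ℝ)^s * x^s = ((s:ℝ) * x)^s := by rw [mul_pow]
      _ ≤ (T.descFactorial s : ℝ) := le_trans h1 h2
      _ = (T.choose s : ℝ) * (Nat.factorial s : ℝ) := by rw [h3]; ring
      _ ≤ (T.choose s : ℝ) * (Real.exp 1 * s * (s:ℝ)^s * Real.exp (-(s:ℝ))) :=
          mul_le_mul_of_nonneg_left h4 hC
  have hss : (0:ℝ) < (s:ℝ)^s := by positivity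
  have h7 : x^s ≤ (T.choose s : ℝ) * (Real.exp 1 * s * Real.exp (-(s:ℝ))) := by
    have h6' : x^s * (s:ℝ)^s ≤ ((T.choose s : ℝ) * (Real.exp 1 * s * Real.exp (-(s:ℝ)))) * (s:ℝ)^s := by
      calc x^s * (s:ℝ)^s = (s:ℝ)^s * x^s := by ring
        _ ≤ (T.choose s : ℝ) * (Real.exp 1 * s * (s:ℝ)^s * Real.exp (-(s:ℝ))) := h6
        _ = ((T.choose s : ℝ) * (Real.exp 1 * s * Real.exp (-(s:ℝ)))) * (s:ℝ)^s := by ring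
    exact le_of_mul_le_mul_right h6' hss
  rw [div_le_iff₀ hs0]
  have hee : Real.exp ((s:ℝ) - 1) * Real.exp (-(s:ℝ)) * Real.exp 1 = 1 := by
    rw [← Real.exp_add, ← Real.exp_add]; ring_nf; exact Real.exp_zero
  calc x^s * Real.exp ((s:ℝ)-1)
      ≤ ((T.choose s : ℝ) * (Real.exp 1 * s * Real.exp (-(s:ℝ)))) * Real.exp ((s:ℝ)-1) :=
        mul_le_mul_of_nonneg_right h7 (Real.exp_nonneg _)
    _ = ((T.choose s : ℝ) * s) * (Real.exp ((s:ℝ)-1) * Real.exp (-(s:ℝ)) * Real.exp 1) := by ring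
    _ = (T.choose s : ℝ) * s := by rw [hee, mul_one]

/-- Ratio bound between binomial coefficients. -/
lemma my_choose_ratio (K k s2 m M' : ℕ) (hkm : k = s2 + m) (hkK : k ≤ K) (hkM : k < M')
    (hMK : M' + s2 ≤ K) :
    (K.choose k : ℝ) ≤ (M'.choose m : ℝ) * ((K:ℝ)/((m:ℝ)+1))^s2 *
      (1 + ((K:ℝ) - s2 - M')/((M':ℝ) - k))^m := by
  set ρ : ℝ := 1 + ((K:ℝ) - s2 - M')/((M':ℝ) - k) with hρdef
  have hMk : (0:ℝ) < (M':ℝ) - k := by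
    have : (k:ℝ) < M' := by exact_mod_cast hkM
    linarith
  have hΔ : (0:ℝ) ≤ (K:ℝ) - s2 - M' := by
    have h := hMK
    have : ((M':ℕ):ℝ) + (s2:ℝ) ≤ (K:ℝ) := by exact_mod_cast hMK
    linarith
  have hρ1 : (1:ℝ) ≤ ρ := by
    have : (0:ℝ) ≤ ((K:ℝ) - s2 - M')/((M':ℝ) - k) := div_nonneg hΔ hMk.le
    rw [hρdef]; linarith
  have hρ0 : (0:ℝ) ≤ ρ := by linarith
  have hd : ∀ j, j ≤ m → (((K - s2).descFactorial j : ℕ) : ℝ) ≤ ρ^j * (M'.descFactorial j : ℝ) := by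
    intro j
    induction j with
    | zero => intro _; simp
    | succ j ih =>
        intro hj
        have ih' := ih (by omega)
        have hjK : j ≤ K - s2 := by omega
        have hjM : j ≤ M' := by omega
        have c1 : ((K - s2 - j : ℕ):ℝ) = (K:ℝ) - s2 - j := by
          have h1 : s2 + j ≤ K := by omega
          rw [Nat.sub_sub]
          rw [Nat.cast_sub h1]
          push_cast; ring
        have c2 : ((M' - j : ℕ):ℝ) = (M':ℝ) - j := by
          rw [Nat.cast_sub hjM]
        have key : (K:ℝ) - s2 - j ≤ ρ * ((M':ℝ) - j) := by
          have h1 : (1:ℝ) ≤ ((M':ℝ) - j)/((M':ℝ) - k) := by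
            rw [le_div_iff₀ hMk]
            have : (j:ℝ) ≤ k := by exact_mod_cast (by omega : j ≤ k)
            linarith
          have h2 : ((K:ℝ) - s2 - M') ≤ ((K:ℝ) - s2 - M') * (((M':ℝ) - j)/((M':ℝ) - k)) := by
            nlinarith
          have h3 : ρ * ((M':ℝ) - j)
              = ((M':ℝ) - j) + ((K:ℝ) - s2 - M') * (((M':ℝ) - j)/((M':ℝ) - k)) := by
            rw [hρdef]; field_simp
          rw [h3]; linarith
        rw [Nat.descFactorial_succ, Nat.descFactorial_succ, Nat.cast_mul, Nat.cast_mul, c1, c2]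
        have hnn1 : (0:ℝ) ≤ (((K - s2).descFactorial j : ℕ) : ℝ) := by positivity
        have hMjnn : (0:ℝ) ≤ (M':ℝ) - j := by
          have : (j:ℝ) ≤ M' := by exact_mod_cast hjM
          linarith
        calc ((K:ℝ) - s2 - j) * (((K - s2).descFactorial j : ℕ) : ℝ)
            ≤ (ρ * ((M':ℝ) - j)) * (ρ^j * (M'.descFactorial j : ℝ)) :=
              mul_le_mul key ih' hnn1 (mul_nonneg hρ0 hMjnn)
          _ = ρ^(j+1) * (((M':ℝ) - j) * (M'.descFactorial j : ℝ)) := by rw [pow_succ]; ring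
  -- combine
  have hm1 : (0:ℝ) < ((m:ℝ)+1)^s2 := by positivity
  have hfm : (0:ℝ) < (Nat.factorial m : ℝ) := by exact_mod_cast Nat.factorial_pos m
  have main : (K.choose k : ℝ) * (((m:ℝ)+1)^s2) ≤ (M'.choose m : ℝ) * (K:ℝ)^s2 * ρ^m := by
    have h1 : (K.choose k : ℝ) * (Nat.factorial k : ℝ) = (K.descFactorial k : ℝ) := by
      rw [Nat.descFactorial_eq_factorial_mul_choose]; push_cast; ring
    have h2 : (K.descFactorial k : ℝ)
        = (K.descFactorial s2 : ℝ) * (((K - s2).descFactorial m : ℕ) : ℝ) := by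
      rw [hkm, my_descFactorial_add]; push_cast; ring
    have h3 : (K.descFactorial s2 : ℝ) ≤ (K:ℝ)^s2 := by
      exact_mod_cast Nat.descFactorial_le_pow K s2
    have h4 := hd m le_rfl
    have h5 : (M'.descFactorial m : ℝ) = (Nat.factorial m : ℝ) * (M'.choose m : ℝ) := by
      exact_mod_cast Nat.descFactorial_eq_factorial_mul_choose M' m
    have h6 : (Nat.factorial m : ℝ) * (((m:ℝ)+1))^s2 ≤ (Nat.factorial k : ℝ) := by
      have := Nat.factorial_mul_pow_le_factorial (m := m) (n := s2)
      have hcast : ((Nat.factorial m * (m+1)^s2 : ℕ) : ℝ) ≤ ((Nat.factorial (m + s2) : ℕ) : ℝ) := by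
        exact_mod_cast this
      push_cast at hcast
      rw [hkm, Nat.add_comm s2 m]
      convert hcast using 2
    have hCnn : (0:ℝ) ≤ (K.choose k : ℝ) := by positivity
    have step1 : (K.choose k : ℝ) * ((Nat.factorial m : ℝ) * (((m:ℝ)+1))^s2)
        ≤ (K.choose k : ℝ) * (Nat.factorial k : ℝ) := mul_le_mul_of_nonneg_left h6 hCnn
    have step2 : (K.choose k : ℝ) * (Nat.factorial k : ℝ)
        ≤ ((M'.choose m : ℝ) * (K:ℝ)^s2 * ρ^m) * (Nat.factorial m : ℝ) := by
      rw [h1, h2]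
      have hnn : (0:ℝ) ≤ (((K - s2).descFactorial m : ℕ) : ℝ) := by positivity
      calc (K.descFactorial s2 : ℝ) * (((K - s2).descFactorial m : ℕ) : ℝ)
          ≤ (K:ℝ)^s2 * (ρ^m * (M'.descFactorial m : ℝ)) := by
            apply mul_le_mul h3 h4 hnn (by positivity)
        _ = ((M'.choose m : ℝ) * (K:ℝ)^s2 * ρ^m) * (Nat.factorial m : ℝ) := by
            rw [h5]; ring
    have step3 : ((K.choose k : ℝ) * (((m:ℝ)+1)^s2)) * (Nat.factorial m : ℝ)
        ≤ ((M'.choose m : ℝ) * (K:ℝ)^s2 * ρ^m) * (Nat.factorial m : ℝ) := by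
      calc ((K.choose k : ℝ) * (((m:ℝ)+1)^s2)) * (Nat.factorial m : ℝ)
          = (K.choose k : ℝ) * ((Nat.factorial m : ℝ) * (((m:ℝ)+1))^s2) := by ring
        _ ≤ (K.choose k : ℝ) * (Nat.factorial k : ℝ) := step1
        _ ≤ ((M'.choose m : ℝ) * (K:ℝ)^s2 * ρ^m) * (Nat.factorial m : ℝ) := step2
    exact le_of_mul_le_mul_right step3 hfm
  have hfin : (M'.choose m : ℝ) * ((K:ℝ)/((m:ℝ)+1))^s2 * ρ^m
      = ((M'.choose m : ℝ) * (K:ℝ)^s2 * ρ^m) / (((m:ℝ)+1)^s2) := by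
    rw [div_pow]; ring
  rw [hfin, le_div_iff₀ hm1]
  exact main


lemma my_exp25 : Real.exp (2/5 : ℝ) ≤ 2 := by
  have he : Real.exp 1 ≤ 2.7182818286 := Real.exp_one_lt_d9.le
  have h5 : (Real.exp (2/5 : ℝ))^5 ≤ (2:ℝ)^5 := by
    rw [← Real.exp_nat_mul]
    have : ((5:ℕ):ℝ) * (2/5 : ℝ) = 2 := by norm_num
    rw [this]
    have : Real.exp 2 = Real.exp 1 * Real.exp 1 := by rw [← Real.exp_add]; norm_num
    rw [this]
    nlinarith [Real.exp_pos 1]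
  exact le_of_pow_le_pow_left₀ (by norm_num) (by norm_num) h5

lemma my_numeric (lam : ℝ) (hlam : 2^30 ≤ lam) (s : ℕ)
    (hssr : Real.sqrt lam ≤ s) (hsub : (s:ℝ) ≤ Real.sqrt lam + 1)
    (Qf : ℝ) (hQ0 : 0 ≤ Qf)
    (hQ : Qf ≤ (lam/2)^(s+2) * Real.exp ((6*(s:ℝ))/5 + 4)) :
    40 * lam * Real.exp (Real.sqrt lam/256) * Qf
      ≤ (lam - 1)^s * Real.exp ((s:ℝ) - 1) / s := by
  set sr := Real.sqrt lam with hsrdef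
  have hlam0 : (0:ℝ) < lam := by nlinarith
  have hsr2 : sr^2 = lam := Real.sq_sqrt hlam0.le
  have hsrnn : 0 ≤ sr := Real.sqrt_nonneg lam
  have hsrbig : (32768:ℝ) ≤ sr := by nlinarith
  have hsbig : (32768:ℝ) ≤ s := le_trans hsrbig hssr
  have hs0 : (0:ℝ) < s := by linarith
  have hslam : (s:ℝ) ≤ lam := by nlinarith
  -- Bernoulli
  have hber : (1:ℝ)/2 ≤ (1 - 1/lam)^s := by
    have h1 : (-2:ℝ) ≤ -1/lam := by
      rw [neg_div]
      have : 1/lam ≤ 1 := by rw [div_le_one hlam0]; linarith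
      linarith
    have h2 := one_add_mul_le_pow h1 s
    have h3 : 1 + (s:ℝ) * (-1/lam) = 1 - s/lam := by ring
    have h4 : (s:ℝ)/lam ≤ 1/2 := by
      rw [div_le_div_iff₀ hlam0 (by norm_num : (0:ℝ) < 2)]
      nlinarith
    have h5 : (1:ℝ) + (s:ℝ) * (-1/lam) ≤ (1 + (-1/lam))^s := h2
    have h6 : (1:ℝ) + (-1/lam) = 1 - 1/lam := by ring
    rw [h6] at h5
    linarith
  have hfact : (lam - 1)^s = (lam/2)^s * (2:ℝ)^s * (1 - 1/lam)^s := by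
    rw [← mul_pow, ← mul_pow]
    congr 1
    field_simp
  -- log bound
  have hlog : Real.log lam ≤ (4/181) * s := by
    have hsrr : Real.sqrt sr ^ 2 = sr := Real.sq_sqrt hsrnn
    have hsrrnn : 0 ≤ Real.sqrt sr := Real.sqrt_nonneg sr
    have h181 : (181:ℝ) ≤ Real.sqrt sr := by nlinarith
    have hlog1 : Real.log lam = 2 * Real.log sr := by
      rw [hsrdef, Real.log_sqrt hlam0.le]; ring
    have hlog2 : Real.log sr = 2 * Real.log (Real.sqrt sr) := by
      rw [Real.log_sqrt hsrnn]; ring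
    have hlog3 : Real.log (Real.sqrt sr) ≤ Real.sqrt sr - 1 :=
      Real.log_le_sub_one_of_pos (by linarith)
    have hsrsr : Real.sqrt sr ≤ sr/181 := by
      rw [le_div_iff₀ (by norm_num : (0:ℝ) < 181)]
      nlinarith
    calc Real.log lam = 4 * Real.log (Real.sqrt sr) := by rw [hlog1, hlog2]; ring
      _ ≤ 4 * (sr/181) := by nlinarith
      _ ≤ (4/181) * s := by linarith
  -- main exponential comparison
  have hfin : 20*(s:ℝ)*lam^3 * Real.exp (sr/256 + (6*(s:ℝ))/5 + 4)
      ≤ 2^s * Real.exp ((s:ℝ) - 1) := by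
    have t1a : 20*(s:ℝ) ≤ lam * lam := by nlinarith
    have t1 : 20*(s:ℝ)*lam^3 ≤ lam^5 := by nlinarith [t1a, pow_pos hlam0 3]
    have t2 : lam^5 = Real.exp (5 * Real.log lam) := by
      have : Real.exp (Real.log lam) = lam := Real.exp_log hlam0
      rw [show (5:ℝ) * Real.log lam = ((5:ℕ):ℝ) * Real.log lam by norm_num,
        Real.exp_nat_mul, this]
    have t3 : lam^5 * Real.exp (sr/256 + (6*(s:ℝ))/5 + 4)
        = Real.exp (5 * Real.log lam + sr/256 + (6*(s:ℝ))/5 + 4) := by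
      rw [t2, ← Real.exp_add]
      congr 1
      ring
    have t4 : 5 * Real.log lam + sr/256 + (6*(s:ℝ))/5 + 4 ≤ (2/5)*s + ((s:ℝ) - 1) := by
      have l1 : 5 * Real.log lam ≤ (20/181) * s := by linarith
      have l2 : sr/256 ≤ (s:ℝ)/256 := by linarith
      linarith
    have t5 : Real.exp ((2/5)*(s:ℝ) + ((s:ℝ) - 1)) = (Real.exp (2/5:ℝ))^s * Real.exp ((s:ℝ)-1) := by
      rw [Real.exp_add]
      congr 1
      rw [show (2/5:ℝ)*(s:ℝ) = ((s:ℕ):ℝ) * (2/5:ℝ) by ring, Real.exp_nat_mul]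
    have t6 : (Real.exp (2/5:ℝ))^s ≤ 2^s := pow_le_pow_left₀ (Real.exp_nonneg _) my_exp25 s
    calc 20*(s:ℝ)*lam^3 * Real.exp (sr/256 + (6*(s:ℝ))/5 + 4)
        ≤ lam^5 * Real.exp (sr/256 + (6*(s:ℝ))/5 + 4) :=
          mul_le_mul_of_nonneg_right t1 (Real.exp_nonneg _)
      _ = Real.exp (5 * Real.log lam + sr/256 + (6*(s:ℝ))/5 + 4) := t3
      _ ≤ Real.exp ((2/5)*s + ((s:ℝ) - 1)) := Real.exp_le_exp.mpr t4
      _ = (Real.exp (2/5:ℝ))^s * Real.exp ((s:ℝ)-1) := t5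
      _ ≤ 2^s * Real.exp ((s:ℝ)-1) :=
          mul_le_mul_of_nonneg_right t6 (Real.exp_nonneg _)
  -- assemble
  have hpow0 : (0:ℝ) ≤ (lam/2)^s := by positivity
  have step1 : 40 * lam * Real.exp (sr/256) * Qf
      ≤ 40 * lam * Real.exp (sr/256) * ((lam/2)^(s+2) * Real.exp ((6*(s:ℝ))/5 + 4)) := by
    apply mul_le_mul_of_nonneg_left hQ (by positivity)
  have step2 : 40 * lam * Real.exp (sr/256) * ((lam/2)^(s+2) * Real.exp ((6*(s:ℝ))/5 + 4))
      = (lam/2)^s * (10 * lam^3 * (Real.exp (sr/256) * Real.exp ((6*(s:ℝ))/5 + 4))) := by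
    rw [pow_add]
    field_simp
    ring
  have hee : Real.exp (sr/256) * Real.exp ((6*(s:ℝ))/5 + 4) = Real.exp (sr/256 + (6*(s:ℝ))/5 + 4) := by
    rw [← Real.exp_add]; ring_nf
  have step3 : (lam/2)^s * (10 * lam^3 * Real.exp (sr/256 + (6*(s:ℝ))/5 + 4))
      ≤ (lam/2)^s * ((2:ℝ)^s * (1/2) * Real.exp ((s:ℝ)-1) / s) := by
    apply mul_le_mul_of_nonneg_left _ hpow0
    rw [le_div_iff₀ hs0]
    calc 10 * lam^3 * Real.exp (sr/256 + (6*(s:ℝ))/5 + 4) * s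
        = (20*(s:ℝ)*lam^3 * Real.exp (sr/256 + (6*(s:ℝ))/5 + 4)) * (1/2) := by ring
      _ ≤ (2^s * Real.exp ((s:ℝ) - 1)) * (1/2) := by
          apply mul_le_mul_of_nonneg_right hfin (by norm_num)
      _ = 2^s * (1/2) * Real.exp ((s:ℝ)-1) := by ring
  have step4 : (lam/2)^s * ((2:ℝ)^s * (1/2) * Real.exp ((s:ℝ)-1) / s)
      ≤ (lam - 1)^s * Real.exp ((s:ℝ) - 1) / s := by
    rw [hfact]
    have e1 : (lam/2)^s * ((2:ℝ)^s*(1/2)*Real.exp ((s:ℝ)-1)/(s:ℝ))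
        = ((lam/2)^s * (2:ℝ)^s * Real.exp ((s:ℝ)-1) * (1/2))/(s:ℝ) := by ring
    have e2 : (lam/2)^s * (2:ℝ)^s * (1-1/lam)^s * Real.exp ((s:ℝ)-1)/(s:ℝ)
        = ((lam/2)^s * (2:ℝ)^s * Real.exp ((s:ℝ)-1) * ((1-1/lam)^s))/(s:ℝ) := by ring
    rw [e1, e2, div_le_div_iff_of_pos_right hs0]
    apply mul_le_mul_of_nonneg_left hber (by positivity)
  calc 40 * lam * Real.exp (sr/256) * Qf
      ≤ 40 * lam * Real.exp (sr/256) * ((lam/2)^(s+2) * Real.exp ((6*(s:ℝ))/5 + 4)) := step1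
    _ = (lam/2)^s * (10 * lam^3 * (Real.exp (sr/256) * Real.exp ((6*(s:ℝ))/5 + 4))) := step2
    _ = (lam/2)^s * (10 * lam^3 * Real.exp (sr/256 + (6*(s:ℝ))/5 + 4)) := by rw [hee]
    _ ≤ (lam/2)^s * ((2:ℝ)^s * (1/2) * Real.exp ((s:ℝ)-1) / s) := step3
    _ ≤ (lam - 1)^s * Real.exp ((s:ℝ) - 1) / s := step4


lemma my_min_image (a d c : ℤ) (hd : 1 ≤ d) (E : Finset ℤ)
    (hE : ∀ x ∈ E, c ≤ x) (hc : c ∈ E) :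
    (E.image (fun x => a + d * x)).min = (↑(a + d * c) : WithTop ℤ) := by
  have hne : (E.image (fun x => a + d * x)).Nonempty :=
    ⟨a + d * c, Finset.mem_image_of_mem _ hc⟩
  rw [← Finset.coe_min' hne]
  congr 1
  apply le_antisymm
  · exact Finset.min'_le _ _ (Finset.mem_image_of_mem _ hc)
  · apply Finset.le_min' _ _ _
    intro y hy
    obtain ⟨x, hx, rfl⟩ := Finset.mem_image.mp hy
    have := hE x hx
    nlinarith
lemma my_fin (n : ℤ) : ({A : Finset ℤ | A ⊆ Finset.Icc 1 n} : Set (Finset ℤ)).Finite := by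
  have : {A : Finset ℤ | A ⊆ Finset.Icc 1 n} = ↑((Finset.Icc 1 n).powerset) := by
    ext A; simp only [Set.mem_setOf_eq, Finset.coe_powerset, Set.mem_preimage,
      Set.mem_powerset_iff, Finset.coe_subset]
  rw [this]; exact Finset.finite_toSet _
def myA0 (B C : Finset ℤ) : Finset ℤ := insert 1 (insert 2 (B ∪ C))

def myF (p : (ℤ × ℤ) × Finset ℤ × Finset ℤ) : Finset ℤ :=
  (myA0 p.2.1 p.2.2).image (fun x => p.1.2 + p.1.1 * x)

noncomputable def myS (D R M T m s : ℕ) : Finset ((ℤ × ℤ) × Finset ℤ × Finset ℤ) :=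
  (Finset.Icc (1:ℤ) (D:ℤ) ×ˢ Finset.Icc (0:ℤ) ((R:ℤ)-1)) ×ˢ
    ((Finset.Icc (3:ℤ) (M:ℤ)).powersetCard m ×ˢ
      (Finset.Icc ((M:ℤ)+1) ((M:ℤ)+(T:ℤ))).powersetCard s)

lemma myS_mem (D R M T m s : ℕ) (p : (ℤ × ℤ) × Finset ℤ × Finset ℤ) :
    p ∈ myS D R M T m s ↔
      ((1 ≤ p.1.1 ∧ p.1.1 ≤ (D:ℤ)) ∧ (0 ≤ p.1.2 ∧ p.1.2 ≤ (R:ℤ)-1)) ∧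
      ((p.2.1 ⊆ Finset.Icc (3:ℤ) (M:ℤ) ∧ p.2.1.card = m) ∧
       (p.2.2 ⊆ Finset.Icc ((M:ℤ)+1) ((M:ℤ)+(T:ℤ)) ∧ p.2.2.card = s)) := by
  simp [myS, Finset.mem_product, Finset.mem_powersetCard, Finset.mem_Icc]

lemma myS_card (D R M T m s : ℕ) (hM : 2 ≤ M) :
    (myS D R M T m s).card = (D * R) * ((M-2).choose m * T.choose s) := by
  rw [myS, Finset.card_product, Finset.card_product, Finset.card_product,
    Finset.card_powersetCard, Finset.card_powersetCard,
    Int.card_Icc, Int.card_Icc, Int.card_Icc, Int.card_Icc]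
  have e1 : ((D:ℤ)+1-1).toNat = D := by omega
  have e2 : (((R:ℤ)-1)+1-0).toNat = R := by omega
  have e3 : ((M:ℤ)+1-3).toNat = M - 2 := by omega
  have e4 : (((M:ℤ)+(T:ℤ))+1-((M:ℤ)+1)).toNat = T := by omega
  rw [e1, e2, e3, e4]

lemma myA0_cases (B C : Finset ℤ) (M T : ℕ) (hM : 2 ≤ M)
    (hB : B ⊆ Finset.Icc 3 (M:ℤ)) (hC : C ⊆ Finset.Icc ((M:ℤ)+1) ((M:ℤ)+(T:ℤ)))
    {x : ℤ} (hx : x ∈ myA0 B C) : (1 ≤ x ∧ x ≤ (M:ℤ)) ∨ x ∈ C := by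
  have hM2 : (2:ℤ) ≤ (M:ℤ) := by exact_mod_cast hM
  rcases Finset.mem_insert.mp hx with rfl | hx
  · left; omega
  rcases Finset.mem_insert.mp hx with rfl | hx
  · left; omega
  rcases Finset.mem_union.mp hx with hx | hx
  · left
    have := Finset.mem_Icc.mp (hB hx)
    omega
  · right; exact hx

lemma myA0_bounds (B C : Finset ℤ) (M T : ℕ) (hM : 2 ≤ M)
    (hB : B ⊆ Finset.Icc 3 (M:ℤ)) (hC : C ⊆ Finset.Icc ((M:ℤ)+1) ((M:ℤ)+(T:ℤ)))
    {x : ℤ} (hx : x ∈ myA0 B C) : 1 ≤ x ∧ x ≤ (M:ℤ)+(T:ℤ) := by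
  have hT0 : (0:ℤ) ≤ (T:ℤ) := by positivity
  rcases myA0_cases B C M T hM hB hC hx with ⟨h1, h2⟩ | h
  · exact ⟨h1, by omega⟩
  · have := Finset.mem_Icc.mp (hC h)
    have hM2 : (2:ℤ) ≤ (M:ℤ) := by exact_mod_cast hM
    omega

lemma myA0_card (B C : Finset ℤ) (M T : ℕ) (hM : 2 ≤ M)
    (hB : B ⊆ Finset.Icc 3 (M:ℤ)) (hC : C ⊆ Finset.Icc ((M:ℤ)+1) ((M:ℤ)+(T:ℤ))) :
    (myA0 B C).card = B.card + C.card + 2 := by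
  have hM2 : (2:ℤ) ≤ (M:ℤ) := by exact_mod_cast hM
  have hBx : ∀ x ∈ B, 3 ≤ x ∧ x ≤ (M:ℤ) := fun x hx => Finset.mem_Icc.mp (hB hx)
  have hCx : ∀ x ∈ C, (M:ℤ)+1 ≤ x ∧ x ≤ (M:ℤ)+(T:ℤ) := fun x hx => Finset.mem_Icc.mp (hC hx)
  have h1 : (1:ℤ) ∉ insert 2 (B ∪ C) := by
    simp only [Finset.mem_insert, Finset.mem_union]
    push_neg
    refine ⟨by omega, fun h => by have := hBx 1 h; omega, fun h => by have := hCx 1 h; omega⟩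
  have h2 : (2:ℤ) ∉ B ∪ C := by
    simp only [Finset.mem_union]
    push_neg
    exact ⟨fun h => by have := hBx 2 h; omega, fun h => by have := hCx 2 h; omega⟩
  have hdisj : Disjoint B C := by
    rw [Finset.disjoint_left]
    intro x hxB hxC
    have := hBx x hxB; have := hCx x hxC; omega
  rw [myA0, Finset.card_insert_of_notMem h1, Finset.card_insert_of_notMem h2,
    Finset.card_union_of_disjoint hdisj]

lemma myF_card (p : (ℤ × ℤ) × Finset ℤ × Finset ℤ) (hd : 1 ≤ p.1.1) :
    (myF p).card = (myA0 p.2.1 p.2.2).card := by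
  apply Finset.card_image_of_injective
  intro u v huv
  have huv' : p.1.2 + p.1.1 * u = p.1.2 + p.1.1 * v := huv
  have : p.1.1 * u = p.1.1 * v := by omega
  exact mul_left_cancel₀ (by omega) this

lemma myF_subset (n D R M T : ℕ) (hDLR : D*(M+T) + R ≤ n)
    (p : (ℤ × ℤ) × Finset ℤ × Finset ℤ) (hM : 2 ≤ M)
    (hd : 1 ≤ p.1.1) (hdD : p.1.1 ≤ (D:ℤ)) (ha : 0 ≤ p.1.2) (haR : p.1.2 ≤ (R:ℤ)-1)
    (hB : p.2.1 ⊆ Finset.Icc 3 (M:ℤ)) (hC : p.2.2 ⊆ Finset.Icc ((M:ℤ)+1) ((M:ℤ)+(T:ℤ))) :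
    myF p ⊆ Finset.Icc 1 (n:ℤ) := by
  intro y hy
  obtain ⟨x, hx, rfl⟩ := Finset.mem_image.mp hy
  obtain ⟨hx1, hx2⟩ := myA0_bounds _ _ M T hM hB hC hx
  rw [Finset.mem_Icc]
  constructor
  · have : (1:ℤ) ≤ p.1.1 * x := by nlinarith
    omega
  · have h1 : p.1.1 * x ≤ (D:ℤ) * ((M:ℤ)+(T:ℤ)) := by
      apply mul_le_mul hdD hx2 (by omega) (by positivity)
    have h2 : ((D*(M+T) + R : ℕ) : ℤ) ≤ (n:ℤ) := by exact_mod_cast hDLR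
    push_cast at h2
    omega

lemma myF_sumset (p : (ℤ × ℤ) × Finset ℤ × Finset ℤ) (M T s : ℕ) (hM : 2 ≤ M)
    (hd : 1 ≤ p.1.1)
    (hB : p.2.1 ⊆ Finset.Icc 3 (M:ℤ)) (hC : p.2.2 ⊆ Finset.Icc ((M:ℤ)+1) ((M:ℤ)+(T:ℤ)))
    (hCs : p.2.2.card = s) :
    (myF p + myF p).card ≤ 2*M + T + s*s := by
  obtain ⟨⟨d, a⟩, B, C⟩ := p
  simp only at hd hB hC hCs ⊢
  -- step 1 : myF p + myF p has card at most that of A0 + A0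
  have hsub1 : myF ((d,a),(B,C)) + myF ((d,a),(B,C)) ⊆
      (myA0 B C + myA0 B C).image (fun y => 2*a + d*y) := by
    intro z hz
    rw [Finset.mem_add] at hz
    obtain ⟨u, hu, v, hv, rfl⟩ := hz
    obtain ⟨x, hx, rfl⟩ := Finset.mem_image.mp hu
    obtain ⟨y, hy, rfl⟩ := Finset.mem_image.mp hv
    apply Finset.mem_image.mpr
    exact ⟨x + y, Finset.add_mem_add hx hy, by ring⟩
  have h1 : (myF ((d,a),(B,C)) + myF ((d,a),(B,C))).card ≤ (myA0 B C + myA0 B C).card :=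
    le_trans (Finset.card_le_card hsub1) Finset.card_image_le
  -- step 2 : A0 + A0 ⊆ Icc 2 (2M+T) ∪ (C+C)
  have hsub2 : myA0 B C + myA0 B C ⊆
      Finset.Icc (2:ℤ) (2*(M:ℤ)+(T:ℤ)) ∪ (C + C) := by
    intro z hz
    rw [Finset.mem_add] at hz
    obtain ⟨x, hx, y, hy, rfl⟩ := hz
    have hxb := myA0_bounds B C M T hM hB hC hx
    have hyb := myA0_bounds B C M T hM hB hC hy
    rcases myA0_cases B C M T hM hB hC hx with hxI | hxC
    · apply Finset.mem_union_left
      rw [Finset.mem_Icc]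
      omega
    · rcases myA0_cases B C M T hM hB hC hy with hyI | hyC
      · apply Finset.mem_union_left
        rw [Finset.mem_Icc]
        have := Finset.mem_Icc.mp (hC hxC)
        omega
      · exact Finset.mem_union_right _ (Finset.add_mem_add hxC hyC)
  have h2 : (myA0 B C + myA0 B C).card ≤ (2*M + T - 1) + s*s := by
    calc (myA0 B C + myA0 B C).card
        ≤ (Finset.Icc (2:ℤ) (2*(M:ℤ)+(T:ℤ)) ∪ (C + C)).card := Finset.card_le_card hsub2
      _ ≤ (Finset.Icc (2:ℤ) (2*(M:ℤ)+(T:ℤ))).card + (C + C).card := Finset.card_union_le _ _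
      _ ≤ (2*M + T - 1) + s*s := by
          apply Nat.add_le_add
          · rw [Int.card_Icc]
            omega
          · calc (C + C).card ≤ C.card * C.card := Finset.card_add_le
              _ = s*s := by rw [hCs]
  omega

lemma myF_injOn (D R M T m s : ℕ) (hM : 12 ≤ M) :
    Set.InjOn myF ↑(myS D R M T m s) := by
  intro p hp q hq hFeq
  obtain ⟨⟨d, a⟩, B, C⟩ := p
  obtain ⟨⟨d', a'⟩, B', C'⟩ := q
  rw [Finset.mem_coe, myS_mem] at hp hq
  obtain ⟨⟨⟨hd1, hdD⟩, ha0, haR⟩, ⟨hB, hBc⟩, hC, hCc⟩ := hp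
  obtain ⟨⟨⟨hd1', hdD'⟩, ha0', haR'⟩, ⟨hB', hBc'⟩, hC', hCc'⟩ := hq
  simp only at hd1 hdD ha0 haR hB hBc hC hCc hd1' hdD' ha0' haR' hB' hBc' hC' hCc' hFeq
  have hM2 : (2:ℤ) ≤ (M:ℤ) := by exact_mod_cast (by omega : 2 ≤ M)
  have hMb : (12:ℤ) ≤ (M:ℤ) := by exact_mod_cast hM
  have hBx : ∀ x ∈ B, 3 ≤ x ∧ x ≤ (M:ℤ) := fun x hx => Finset.mem_Icc.mp (hB hx)
  have hCx : ∀ x ∈ C, (M:ℤ)+1 ≤ x ∧ x ≤ (M:ℤ)+(T:ℤ) := fun x hx => Finset.mem_Icc.mp (hC hx)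
  have hBx' : ∀ x ∈ B', 3 ≤ x ∧ x ≤ (M:ℤ) := fun x hx => Finset.mem_Icc.mp (hB' hx)
  have hCx' : ∀ x ∈ C', (M:ℤ)+1 ≤ x ∧ x ≤ (M:ℤ)+(T:ℤ) := fun x hx => Finset.mem_Icc.mp (hC' hx)
  -- minimum extraction
  have hall : ∀ x ∈ myA0 B C, (1:ℤ) ≤ x := fun x hx =>
    (myA0_bounds B C M T (by omega) hB hC hx).1
  have hall' : ∀ x ∈ myA0 B' C', (1:ℤ) ≤ x := fun x hx =>
    (myA0_bounds B' C' M T (by omega) hB' hC' hx).1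
  have h1mem : (1:ℤ) ∈ myA0 B C := Finset.mem_insert_self _ _
  have h1mem' : (1:ℤ) ∈ myA0 B' C' := Finset.mem_insert_self _ _
  have hmin1 := my_min_image a d 1 hd1 (myA0 B C) hall h1mem
  have hmin1' := my_min_image a' d' 1 hd1' (myA0 B' C') hall' h1mem'
  have hFF : myF ((d,a),(B,C)) = (myA0 B C).image (fun x => a + d * x) := rfl
  have hFF' : myF ((d',a'),(B',C')) = (myA0 B' C').image (fun x => a' + d' * x) := rfl
  rw [← hFF] at hmin1
  rw [← hFF'] at hmin1'
  rw [hFeq, hmin1'] at hmin1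
  have heq1 : a' + d' * 1 = a + d * 1 := by exact_mod_cast hmin1
  -- second minimum
  have herase : ∀ (a d : ℤ) (B C : Finset ℤ), 1 ≤ d →
      (∀ x ∈ B, 3 ≤ x ∧ x ≤ (M:ℤ)) → (∀ x ∈ C, (M:ℤ)+1 ≤ x ∧ x ≤ (M:ℤ)+(T:ℤ)) →
      ((myA0 B C).image (fun x => a + d * x)).erase (a + d * 1)
        = (insert 2 (B ∪ C)).image (fun x => a + d * x) := by
    intro a d B C hd hBx hCx
    rw [myA0, Finset.image_insert]
    have hnot : a + d * 1 ∉ (insert 2 (B ∪ C)).image (fun x => a + d * x) := by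
      rw [Finset.mem_image]
      rintro ⟨x, hx, hxe⟩
      have hx2 : (2:ℤ) ≤ x := by
        rcases Finset.mem_insert.mp hx with rfl | hx
        · omega
        rcases Finset.mem_union.mp hx with hx | hx
        · have := hBx x hx; omega
        · have := hCx x hx; omega
      nlinarith
    rw [Finset.erase_insert hnot]
  have h2all : ∀ x ∈ insert (2:ℤ) (B ∪ C), (2:ℤ) ≤ x := by
    intro x hx
    rcases Finset.mem_insert.mp hx with rfl | hx
    · omega
    rcases Finset.mem_union.mp hx with hx | hx
    · have := hBx x hx; omega
    · have := hCx x hx; omega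
  have h2all' : ∀ x ∈ insert (2:ℤ) (B' ∪ C'), (2:ℤ) ≤ x := by
    intro x hx
    rcases Finset.mem_insert.mp hx with rfl | hx
    · omega
    rcases Finset.mem_union.mp hx with hx | hx
    · have := hBx' x hx; omega
    · have := hCx' x hx; omega
  have hmin2 := my_min_image a d 2 hd1 (insert 2 (B ∪ C)) h2all (Finset.mem_insert_self _ _)
  have hmin2' := my_min_image a' d' 2 hd1' (insert 2 (B' ∪ C')) h2all' (Finset.mem_insert_self _ _)
  rw [← herase a d B C hd1 hBx hCx] at hmin2
  rw [← herase a' d' B' C' hd1' hBx' hCx'] at hmin2'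
  rw [← hFF] at hmin2
  rw [← hFF'] at hmin2'
  rw [hFeq] at hmin2
  rw [← heq1] at hmin2
  have heq2 : a' + d' * 2 = a + d * 2 := by
    have hcomb := hmin2'.symm.trans hmin2
    exact_mod_cast hcomb
  have hdd : d = d' := by omega
  have haa : a = a' := by omega
  subst hdd; subst haa
  -- sets equal
  have hinj : Function.Injective (fun x : ℤ => a + d * x) := by
    intro u v huv
    simp only at huv
    have : d * u = d * v := by omega
    exact mul_left_cancel₀ (by omega) this
  have hA0 : myA0 B C = myA0 B' C' := Finset.image_injective hinj hFeq
  -- recover B and C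
  have hrecB : ∀ (B C : Finset ℤ), (∀ x ∈ B, 3 ≤ x ∧ x ≤ (M:ℤ)) →
      (∀ x ∈ C, (M:ℤ)+1 ≤ x ∧ x ≤ (M:ℤ)+(T:ℤ)) →
      (myA0 B C).filter (fun x => 3 ≤ x ∧ x ≤ (M:ℤ)) = B := by
    intro B C hBx hCx
    ext x
    simp only [Finset.mem_filter, myA0, Finset.mem_insert, Finset.mem_union]
    constructor
    · rintro ⟨rfl | rfl | hx | hx, hx3, hxM⟩
      · omega
      · omega
      · exact hx
      · have := hCx x hx; omega
    · intro hx
      have := hBx x hx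
      exact ⟨Or.inr (Or.inr (Or.inl hx)), this.1, this.2⟩
  have hrecC : ∀ (B C : Finset ℤ), (∀ x ∈ B, 3 ≤ x ∧ x ≤ (M:ℤ)) →
      (∀ x ∈ C, (M:ℤ)+1 ≤ x ∧ x ≤ (M:ℤ)+(T:ℤ)) →
      (myA0 B C).filter (fun x => (M:ℤ)+1 ≤ x) = C := by
    intro B C hBx hCx
    ext x
    simp only [Finset.mem_filter, myA0, Finset.mem_insert, Finset.mem_union]
    constructor
    · rintro ⟨rfl | rfl | hx | hx, hxM⟩
      · omega
      · omega
      · have := hBx x hx; omega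
      · exact hx
    · intro hx
      have := hCx x hx
      exact ⟨Or.inr (Or.inr (Or.inr hx)), this.1⟩
  have hBB : B = B' := by
    rw [← hrecB B C hBx hCx, ← hrecB B' C' hBx' hCx', hA0]
  have hCC : C = C' := by
    rw [← hrecC B C hBx hCx, ← hrecC B' C' hBx' hCx', hA0]
  subst hBB; subst hCC
  rfl

end Statement19Aux

set_option maxHeartbeats 1000000 in
/-- lower bound `|Λ(n,k)| ≥ exp(2⁻⁸√λ)·(n²/k)·binom(λk/2,k)` for
large `λ`. Here `K` denotes the natural number `λk/2`. -/
theorem statement19 (lam : ℝ) (hlam : 2 ^ 30 ≤ lam) :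
    ∃ N : ℕ, ∀ n k K : ℕ, N ≤ n → N ≤ k → lam * k ≤ (n : ℝ) →
      (K : ℝ) = lam * k / 2 →
      Real.exp ((2 : ℝ) ^ (-8 : ℤ) * Real.sqrt lam) * ((n : ℝ) ^ 2 / k) *
          (K.choose k : ℝ)
        ≤ ((Lambda lam n k).ncard : ℝ) := by
  classical
  refine ⟨1000*(⌈Real.sqrt lam⌉₊+2)*(⌈Real.sqrt lam⌉₊+2), ?_⟩
  intro n k K hn hk hnk hK
  obtain ⟨s, hsdef⟩ : ∃ s, s = ⌈Real.sqrt lam⌉₊ := ⟨_, rfl⟩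
  rw [← hsdef] at hn hk
  -- ===== basic real facts =====
  have hlam0 : (0:ℝ) < lam := by nlinarith
  have hsrnn : 0 ≤ Real.sqrt lam := Real.sqrt_nonneg lam
  have hsr2 : Real.sqrt lam ^ 2 = lam := Real.sq_sqrt hlam0.le
  have hsrbig : (32768:ℝ) ≤ Real.sqrt lam := by nlinarith [hsr2, hsrnn, hlam]
  have hssr : Real.sqrt lam ≤ (s:ℝ) := by rw [hsdef]; exact Nat.le_ceil _
  have hsubr : (s:ℝ) ≤ Real.sqrt lam + 1 := by rw [hsdef]; exact (Nat.ceil_lt_add_one hsrnn).le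
  have hs15 : 32768 ≤ s := by exact_mod_cast le_trans hsrbig hssr
  have hs1 : 1 ≤ s := by omega
  have hkN : 1000*(s+2)*(s+2) ≤ k := hk
  have hk1 : 0 < k := lt_of_lt_of_le (by positivity) hkN
  have hk0 : (0:ℝ) < k := by exact_mod_cast hk1
  have h2K : 2*(K:ℝ) = lam * k := by rw [hK]; ring
  have hK0 : (0:ℝ) < K := by nlinarith [mul_pos hlam0 hk0]
  have hK1 : 0 < K := by exact_mod_cast hK0
  have hKk : 2^29 * k ≤ K := by
    have : ((2^29 * k : ℕ) : ℝ) ≤ (K:ℝ) := by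
      push_cast
      nlinarith [mul_le_mul_of_nonneg_right hlam hk0.le]
    exact_mod_cast this
  have hkK : k ≤ K := by omega
  have hslam : (s:ℝ) ≤ lam := by nlinarith [hsr2, hsrbig, hsubr]
  have hs2lam : (s:ℝ)*(s:ℝ) ≤ 2*lam := by nlinarith [hsr2, hsrbig, hsubr, hssr, hsrnn]
  have hkr : (1000:ℝ)*((s:ℝ)+2)*((s:ℝ)+2) ≤ k := by exact_mod_cast hkN
  have hsk : 100*(s:ℝ) + 100 ≤ k := by nlinarith [hkr, Nat.cast_nonneg (α := ℝ) s]
  -- ===== natural number quantities =====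
  have hks : s + 2 ≤ k := by
    have h1 : 1*(s+2) ≤ (1000*(s+2))*(s+2) := Nat.mul_le_mul_right _ (by omega)
    omega
  obtain ⟨m, hkm⟩ : ∃ m, k = (s+2) + m := ⟨k - (s+2), by omega⟩
  set T := 2*s*K/k with hTdef
  -- T bounds
  have hT_ub : (T:ℝ) ≤ (s:ℝ) * lam := by
    calc (T:ℝ) ≤ ((2*s*K : ℕ):ℝ)/(k:ℝ) := Nat.cast_div_le
      _ = (s:ℝ) * (2*(K:ℝ)) / k := by push_cast; ring
      _ = (s:ℝ) * lam := by rw [h2K]; field_simp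
  have hT1 : 2*s*K < (T+1)*k := by
    have hlt : 2*s*K/k < T+1 := by omega
    exact (Nat.div_lt_iff_lt_mul hk1).mp hlt
  clear_value T
  clear hTdef
  have hT_lb : (s:ℝ) * lam ≤ (T:ℝ) + 1 := by
    have hc : ((2*s*K : ℕ):ℝ) ≤ (((T+1)*k : ℕ):ℝ) := by exact_mod_cast hT1.le
    push_cast at hc
    have h4 : (s:ℝ) * lam * k = (s:ℝ) * (2*(K:ℝ)) := by rw [h2K]; ring
    have h3 : (s:ℝ) * lam * k ≤ ((T:ℝ)+1) * k := by linarith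
    exact le_of_mul_le_mul_right h3 hk0
  have hT50 : 50 * T ≤ K := by
    have hr : 50*(T:ℝ) ≤ (K:ℝ) := by
      linarith only [mul_le_mul_of_nonneg_left hsk hlam0.le, hT_ub, h2K, hlam0,
        mul_nonneg hlam0.le (Nat.cast_nonneg (α := ℝ) s)]
    exact_mod_cast hr
  obtain ⟨E, hEdef⟩ : ∃ E, E = (T + s*s + 1)/2 + 1 := ⟨_, rfl⟩
  have hE_lb : T + s*s + 2 ≤ 2*E := by omega
  have hE_ub : 2*E ≤ T + s*s + 3 := by omega
  clear hEdef
  have hE_ubr : 2*(E:ℝ) ≤ (s:ℝ)*lam + (s:ℝ)*(s:ℝ) + 3 := by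
    have hc : ((2*E : ℕ):ℝ) ≤ ((T + s*s + 3 : ℕ):ℝ) := Nat.cast_le.mpr hE_ub
    push_cast at hc
    linarith
  have hE12 : 12 * E ≤ K := by
    have hr : 12*(E:ℝ) ≤ (K:ℝ) := by
      have hprod := mul_le_mul_of_nonneg_left hsk hlam0.le
      have hls := mul_nonneg hlam0.le (Nat.cast_nonneg (α := ℝ) s)
      have e1 : 6*(s:ℝ)*lam ≤ lam*k/6 := by linarith only [hprod, hls, hlam0]
      have e2 : 6*((s:ℝ)*(s:ℝ)) ≤ 12*lam := by linarith only [hs2lam]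
      have e3 : 12*lam ≤ lam*k/6 := by linarith only [hprod, hls, hlam0]
      have e4 : (18:ℝ) ≤ lam*k/6 := by linarith only [hprod, hls, hlam]
      linarith only [hE_ubr, e1, e2, e3, e4, h2K]
    exact_mod_cast hr
  have hEs : s ≤ E := by
    have : 2*s ≤ s*s := Nat.mul_le_mul_right s (by omega)
    omega
  obtain ⟨M, hMK⟩ : ∃ M, M + E = K := ⟨K - E, by omega⟩
  have hMr : (M:ℝ) = (K:ℝ) - E := by
    have hc : ((M + E : ℕ):ℝ) = (K:ℝ) := by exact_mod_cast congrArg (Nat.cast (R := ℝ)) hMK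
    push_cast at hc; linarith
  have hM12 : 12 ≤ M := by omega
  have hkM : k + 5 ≤ M := by omega
  have hbudget : 2*M + T + s*s + 2 ≤ 2*K := by omega
  obtain ⟨L, hLdef⟩ : ∃ L, L = M + T := ⟨_, rfl⟩
  have hL50 : 50 * L ≤ 51 * K := by omega
  have hL1 : 1 ≤ L := by omega
  have hn2K : 2*K ≤ n := by
    have hc : ((2*K:ℕ):ℝ) ≤ (n:ℝ) := by push_cast; linarith [h2K, hnk]
    exact_mod_cast hc
  have hn6 : 6 ≤ n := by omega
  obtain ⟨R, hRdef⟩ : ∃ R, R = n/4 := ⟨_, rfl⟩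
  obtain ⟨D, hDdef⟩ : ∃ D, D = max 1 (n/(2*L)) := ⟨_, rfl⟩
  have hD1 : 1 ≤ D := by rw [hDdef]; exact le_max_left _ _
  have hRn : n ≤ 8 * R := by omega
  have hDLR : D*L + R ≤ n := by
    rcases max_choice 1 (n/(2*L)) with hD | hD
    · have hDval : D = 1 := hDdef.trans hD
      rw [hDval, one_mul]
      omega
    · have hDval : D = n/(2*L) := hDdef.trans hD
      have h1 : 2*(D*L) ≤ n := by
        rw [hDval]
        calc 2*((n/(2*L))*L) = (n/(2*L))*(2*L) := by ring
          _ ≤ n := Nat.div_mul_le_self _ _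
      omega
  have hDn : (n:ℝ) ≤ 5*(K:ℝ)*D := by
    have hD1r : (1:ℝ) ≤ D := by exact_mod_cast hD1
    have hL50r : 50*(L:ℝ) ≤ 51*K := by exact_mod_cast hL50
    have hL0 : (0:ℝ) < L := by exact_mod_cast hL1
    rcases le_or_gt (n:ℝ) (5*(K:ℝ)) with h | h
    · linarith only [h, mul_le_mul_of_nonneg_left hD1r (by positivity : (0:ℝ) ≤ 5*(K:ℝ))]
    · -- n > 5K : use D ≥ n/(2L)
      have hq : n/(2*L) ≤ D := by rw [hDdef]; exact le_max_right _ _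
      have hqr : ((n/(2*L) : ℕ):ℝ) ≤ D := by exact_mod_cast hq
      have hdm := Nat.div_add_mod n (2*L)
      have hml : n % (2*L) < 2*L := Nat.mod_lt _ (by omega)
      have hcast : (n:ℝ) = 2*(L:ℝ)*((n/(2*L):ℕ):ℝ) + ((n % (2*L) :ℕ):ℝ) := by
        exact_mod_cast congrArg (Nat.cast (R := ℝ)) hdm.symm
      have hmlr : ((n % (2*L) :ℕ):ℝ) < 2*L := by exact_mod_cast hml
      have h4L : 4*(L:ℝ) ≤ n := by linarith
      have hq2 : 4*(L:ℝ)*((n/(2*L):ℕ):ℝ) ≥ (n:ℝ) := by linarith only [hcast, hmlr, h4L]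
      have h5K4L : 4*(L:ℝ) ≤ 5*K := by linarith
      have hqnn : (0:ℝ) ≤ ((n/(2*L):ℕ):ℝ) := Nat.cast_nonneg _
      linarith only [hq2, mul_le_mul_of_nonneg_left hqr (by positivity : (0:ℝ) ≤ 5*(K:ℝ)),
        mul_le_mul_of_nonneg_right h5K4L hqnn]
  -- ===== apply the binomial lemmas =====
  have hratio := my_choose_ratio K k (s+2) m (M-2) hkm hkK (by omega) (by omega)
  obtain ⟨ρ, hρdef⟩ : ∃ ρ : ℝ,
      ρ = 1 + ((K:ℝ) - ((s+2:ℕ):ℝ) - ((M-2:ℕ):ℝ))/(((M-2:ℕ):ℝ) - (k:ℝ)) := ⟨_, rfl⟩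
  rw [← hρdef] at hratio
  obtain ⟨Qf, hQfdef⟩ : ∃ Q : ℝ, Q = ((K:ℝ)/((m:ℝ)+1))^(s+2) * ρ^m := ⟨_, rfl⟩
  have hratio' : (K.choose k : ℝ) ≤ ((M-2).choose m : ℝ) * Qf := by
    rw [hQfdef]
    calc (K.choose k : ℝ) ≤ ((M-2).choose m : ℝ) * ((K:ℝ)/((m:ℝ)+1))^(s+2) * ρ^m := hratio
      _ = ((M-2).choose m : ℝ) * (((K:ℝ)/((m:ℝ)+1))^(s+2) * ρ^m) := by ring
  -- cast facts
  have hscast : ((s+2:ℕ):ℝ) = (s:ℝ)+2 := by push_cast; ring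
  have hM2cast : ((M-2:ℕ):ℝ) = (M:ℝ)-2 := by
    have h2M : (2:ℕ) ≤ M := by omega
    rw [Nat.cast_sub h2M]; norm_num
  have hmcast : (m:ℝ) = (k:ℝ) - (s:ℝ) - 2 := by
    have := congrArg (Nat.cast (R := ℝ)) hkm
    push_cast at this
    linarith
  have hE12r : 12*(E:ℝ) ≤ K := by exact_mod_cast hE12
  have hKkr : 2^29*(k:ℝ) ≤ K := by exact_mod_cast hKk
  have hEsr : (s:ℝ) ≤ E := by exact_mod_cast hEs
  have hkm_r : (m:ℝ) ≤ k := by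
    have : m ≤ k := by omega
    exact_mod_cast this
  have hm0 : (0:ℝ) ≤ m := Nat.cast_nonneg m
  -- denominator bounds
  have hdenom_lb : 5*(K:ℝ)/6 ≤ ((M-2:ℕ):ℝ) - k := by
    rw [hM2cast, hMr]
    linarith
  have hdenom_pos : (0:ℝ) < ((M-2:ℕ):ℝ) - k := by linarith
  have hΔeq : (K:ℝ) - ((s+2:ℕ):ℝ) - ((M-2:ℕ):ℝ) = (E:ℝ) - s := by
    rw [hscast, hM2cast, hMr]; ring
  have hΔnn : (0:ℝ) ≤ (K:ℝ) - ((s+2:ℕ):ℝ) - ((M-2:ℕ):ℝ) := by rw [hΔeq]; linarith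
  have hρ1 : (1:ℝ) ≤ ρ := by
    rw [hρdef]
    have := div_nonneg hΔnn hdenom_pos.le
    linarith
  have hρ0 : (0:ℝ) ≤ ρ := by linarith
  -- bound ρ^m
  have hx_ub : ((K:ℝ) - ((s+2:ℕ):ℝ) - ((M-2:ℕ):ℝ))/(((M-2:ℕ):ℝ) - (k:ℝ))
      ≤ (E:ℝ)/(5*(K:ℝ)/6) := by
    apply div_le_div₀ (by linarith) (by rw [hΔeq]; linarith) (by positivity) hdenom_lb
  have hkE : (k:ℝ)*(E:ℝ) ≤ (s:ℝ)*K + 5*K/2 := by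
    have h1 : (k:ℝ)*(2*(E:ℝ)) ≤ (k:ℝ)*((s:ℝ)*lam + (s:ℝ)*(s:ℝ) + 3) :=
      mul_le_mul_of_nonneg_left hE_ubr hk0.le
    have h2 : (k:ℝ)*((s:ℝ)*(s:ℝ)) ≤ (k:ℝ)*(2*lam) := mul_le_mul_of_nonneg_left hs2lam hk0.le
    have h4 : lam*(k:ℝ) = 2*(K:ℝ) := by linarith only [h2K]
    have h5 : (s:ℝ)*(lam*(k:ℝ)) = (s:ℝ)*(2*(K:ℝ)) := by rw [h4]
    have h6 : (k:ℝ)*(2*lam) = 4*(K:ℝ) := by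
      have : (k:ℝ)*(2*lam) = 2*(lam*(k:ℝ)) := by ring
      rw [this, h4]; ring
    linarith only [h1, h2, h5, h6, hKkr]
  have hmx : (m:ℝ) * (((K:ℝ) - ((s+2:ℕ):ℝ) - ((M-2:ℕ):ℝ))/(((M-2:ℕ):ℝ) - (k:ℝ)))
      ≤ (6*(s:ℝ))/5 + 3 := by
    have h1 : (m:ℝ) * (((K:ℝ) - ((s+2:ℕ):ℝ) - ((M-2:ℕ):ℝ))/(((M-2:ℕ):ℝ) - (k:ℝ)))
        ≤ (k:ℝ) * ((E:ℝ)/(5*(K:ℝ)/6)) := by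
      apply mul_le_mul hkm_r hx_ub (div_nonneg hΔnn hdenom_pos.le) hk0.le
    have h2 : (k:ℝ) * ((E:ℝ)/(5*(K:ℝ)/6)) = (6*((k:ℝ)*E))/(5*K) := by
      field_simp
    have h3 : (6*((k:ℝ)*E))/(5*K) ≤ (6*(s:ℝ))/5 + 3 := by
      rw [div_le_iff₀ (by positivity : (0:ℝ) < 5*(K:ℝ))]
      linarith only [hkE]
    linarith [h1, h2.le, h2.ge]
  have hρm : ρ^m ≤ Real.exp ((6*(s:ℝ))/5 + 3) := by
    have h1 : ρ ≤ Real.exp (((K:ℝ) - ((s+2:ℕ):ℝ) - ((M-2:ℕ):ℝ))/(((M-2:ℕ):ℝ) - (k:ℝ))) := by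
      rw [hρdef]
      linarith [Real.add_one_le_exp (((K:ℝ) - ((s+2:ℕ):ℝ) - ((M-2:ℕ):ℝ))/(((M-2:ℕ):ℝ) - (k:ℝ)))]
    calc ρ^m ≤ (Real.exp (((K:ℝ) - ((s+2:ℕ):ℝ) - ((M-2:ℕ):ℝ))/(((M-2:ℕ):ℝ) - (k:ℝ))))^m :=
          pow_le_pow_left₀ hρ0 h1 m
      _ = Real.exp ((m:ℝ) * (((K:ℝ) - ((s+2:ℕ):ℝ) - ((M-2:ℕ):ℝ))/(((M-2:ℕ):ℝ) - (k:ℝ)))) :=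
          (Real.exp_nat_mul _ m).symm
      _ ≤ Real.exp ((6*(s:ℝ))/5 + 3) := Real.exp_le_exp.mpr hmx
  -- bound (K/(m+1))^(s+2)
  have hm1pos : (0:ℝ) < (m:ℝ)+1 := by positivity
  have hkbig : ((s:ℝ)+1)*((s:ℝ)+3) ≤ k := by
    linarith only [hkr, Nat.cast_nonneg (α := ℝ) s, mul_self_nonneg ((s:ℝ))]
  have hKm1 : (K:ℝ)/((m:ℝ)+1) ≤ lam/2 * (1+1/((s:ℝ)+2)) := by
    rw [div_le_iff₀ hm1pos]
    have hmc1 : (m:ℝ)+1 = (k:ℝ)-(s:ℝ)-1 := by rw [hmcast]; ring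
    rw [hmc1]
    have key : (k:ℝ)*((s:ℝ)+2) ≤ ((s:ℝ)+3)*((k:ℝ)-(s:ℝ)-1) := by linarith only [hkbig]
    have expand : lam/2 * (1+1/((s:ℝ)+2)) * ((k:ℝ)-(s:ℝ)-1)
        = lam*(((s:ℝ)+3)*((k:ℝ)-(s:ℝ)-1))/(2*((s:ℝ)+2)) := by
      field_simp; ring
    rw [expand, le_div_iff₀ (by positivity)]
    have h7 : 2*(K:ℝ)*((s:ℝ)+2) = lam*(k:ℝ)*((s:ℝ)+2) := by rw [h2K]
    linarith only [mul_le_mul_of_nonneg_left key hlam0.le, h7]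
  have hpowK : ((K:ℝ)/((m:ℝ)+1))^(s+2) ≤ (lam/2)^(s+2) * Real.exp 1 := by
    have h1 : ((K:ℝ)/((m:ℝ)+1))^(s+2) ≤ (lam/2 * (1+1/((s:ℝ)+2)))^(s+2) :=
      pow_le_pow_left₀ (by positivity) hKm1 _
    have h2 : (lam/2 * (1+1/((s:ℝ)+2)))^(s+2)
        = (lam/2)^(s+2) * (1+1/((s:ℝ)+2))^(s+2) := mul_pow _ _ _
    have h3 : ((1:ℝ)+1/((s:ℝ)+2))^(s+2) ≤ Real.exp 1 := by
      have h4 : (1:ℝ)+1/((s:ℝ)+2) ≤ Real.exp (1/((s:ℝ)+2)) := by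
        linarith [Real.add_one_le_exp (1/((s:ℝ)+2))]
      calc ((1:ℝ)+1/((s:ℝ)+2))^(s+2) ≤ (Real.exp (1/((s:ℝ)+2)))^(s+2) :=
            pow_le_pow_left₀ (by positivity) h4 _
        _ = Real.exp (((s+2:ℕ):ℝ) * (1/((s:ℝ)+2))) := (Real.exp_nat_mul _ _).symm
        _ = Real.exp 1 := by
            congr 1
            rw [hscast]
            field_simp
    calc ((K:ℝ)/((m:ℝ)+1))^(s+2) ≤ (lam/2)^(s+2) * (1+1/((s:ℝ)+2))^(s+2) := by rw [← h2]; exact h1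
      _ ≤ (lam/2)^(s+2) * Real.exp 1 := by
          apply mul_le_mul_of_nonneg_left h3 (by positivity)
  have hQf0 : (0:ℝ) ≤ Qf := by
    rw [hQfdef]
    positivity
  have hQf : Qf ≤ (lam/2)^(s+2) * Real.exp ((6*(s:ℝ))/5 + 4) := by
    rw [hQfdef]
    calc ((K:ℝ)/((m:ℝ)+1))^(s+2) * ρ^m
        ≤ ((lam/2)^(s+2) * Real.exp 1) * Real.exp ((6*(s:ℝ))/5 + 3) := by
          apply mul_le_mul hpowK hρm (by positivity) (by positivity)
      _ = (lam/2)^(s+2) * (Real.exp 1 * Real.exp ((6*(s:ℝ))/5 + 3)) := by ring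
      _ = (lam/2)^(s+2) * Real.exp ((6*(s:ℝ))/5 + 4) := by
          rw [← Real.exp_add]
          congr 2
          ring
  have hnum := my_numeric lam hlam s hssr hsubr Qf hQf0 hQf
  have hCT := my_choose_lb T s hs1 (lam-1) (by linarith)
    (by
      have : (s:ℝ)*(lam-1) + s = (s:ℝ)*lam := by ring
      linarith [hT_lb])
  -- ===== the family =====
  have hM2' : 2 ≤ M := by omega
  have hmem : ∀ p ∈ myS D R M T m s, myF p ∈ Lambda lam n k := by
    intro p hp
    rw [myS_mem] at hp
    obtain ⟨⟨⟨hd1, hdD⟩, ha0, haR⟩, ⟨hB, hBc⟩, hC, hCc⟩ := hp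
    refine ⟨?_, ?_, ?_⟩
    · exact myF_subset n D R M T (by rw [← hLdef]; exact hDLR) p hM2' hd1 hdD ha0 haR hB hC
    · rw [myF_card p hd1, myA0_card _ _ M T hM2' hB hC, hBc, hCc]
      omega
    · have h1 := myF_sumset p M T s hM2' hd1 hB hC hCc
      have h2 : ((myF p + myF p).card : ℝ) ≤ ((2*M + T + s*s : ℕ) : ℝ) := Nat.cast_le.mpr h1
      have h3 : ((2*M + T + s*s : ℕ) : ℝ) ≤ lam * k := by
        have h4 : ((2*M + T + s*s : ℕ) : ℝ) ≤ ((2*K : ℕ):ℝ) := Nat.cast_le.mpr (by omega)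
        push_cast at h4 ⊢
        linarith only [h4, h2K]
      linarith
  have hinj : Set.InjOn myF ↑(myS D R M T m s) := myF_injOn D R M T m s (by omega)
  have himg : ((myS D R M T m s).image myF).card = (myS D R M T m s).card :=
    Finset.card_image_of_injOn hinj
  have hfinL : (Lambda lam n k).Finite := (my_fin (n:ℤ)).subset (fun A hA => hA.1)
  have hsubL : ↑((myS D R M T m s).image myF) ⊆ Lambda lam n k := by
    intro A hA
    rw [Finset.mem_coe, Finset.mem_image] at hA
    obtain ⟨p, hp, rfl⟩ := hA
    exact hmem p hp
  have hcount : ((myS D R M T m s).card : ℝ) ≤ ((Lambda lam n k).ncard : ℝ) := by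
    have h1 : ((myS D R M T m s).image myF).card ≤ (Lambda lam n k).ncard := by
      rw [← Set.ncard_coe_finset]
      exact Set.ncard_le_ncard hsubL hfinL
    rw [himg] at h1
    exact_mod_cast h1
  have hScard : ((myS D R M T m s).card : ℝ)
      = (D:ℝ) * R * (((M-2).choose m : ℝ) * (T.choose s : ℝ)) := by
    rw [myS_card D R M T m s hM2']
    push_cast
    ring
  -- ===== final chain =====
  have hCB0 : (0:ℝ) ≤ ((M-2).choose m : ℝ) := Nat.cast_nonneg _
  have hCK0 : (0:ℝ) ≤ (K.choose k : ℝ) := Nat.cast_nonneg _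
  have hexp0 : (0:ℝ) < Real.exp (Real.sqrt lam/256) := Real.exp_pos _
  have hTC : 40*lam*Real.exp (Real.sqrt lam/256) * Qf ≤ (T.choose s : ℝ) := le_trans hnum hCT
  have hBC : 40*lam*Real.exp (Real.sqrt lam/256) * (K.choose k : ℝ)
      ≤ ((M-2).choose m : ℝ) * (T.choose s : ℝ) := by
    calc 40*lam*Real.exp (Real.sqrt lam/256) * (K.choose k : ℝ)
        ≤ 40*lam*Real.exp (Real.sqrt lam/256) * (((M-2).choose m : ℝ) * Qf) := by
          apply mul_le_mul_of_nonneg_left hratio' (by positivity)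
      _ = ((M-2).choose m : ℝ) * (40*lam*Real.exp (Real.sqrt lam/256) * Qf) := by ring
      _ ≤ ((M-2).choose m : ℝ) * (T.choose s : ℝ) := mul_le_mul_of_nonneg_left hTC hCB0
  have hn2 : (n:ℝ)^2 ≤ 40*(K:ℝ)*((D:ℝ)*R) := by
    have hRnr : (n:ℝ) ≤ 8*(R:ℝ) := by exact_mod_cast hRn
    have h1 := mul_le_mul hDn hRnr (Nat.cast_nonneg n) (by positivity : (0:ℝ) ≤ 5*(K:ℝ)*D)
    have h2 : (n:ℝ)*(n:ℝ) = (n:ℝ)^2 := by ring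
    linarith only [h1, h2]
  have hfrac : (n:ℝ)^2/k ≤ 40*lam*((D:ℝ)*R) := by
    rw [div_le_iff₀ hk0]
    have h1 : (K:ℝ) ≤ lam*k := by linarith
    calc (n:ℝ)^2 ≤ 40*(K:ℝ)*((D:ℝ)*R) := hn2
      _ ≤ 40*lam*((D:ℝ)*R)*k := by
          have h2 := mul_le_mul_of_nonneg_right h1 (by positivity : (0:ℝ) ≤ 40*((D:ℝ)*R))
          linarith only [h2]
  have hpow8 : (2:ℝ)^(-8:ℤ) * Real.sqrt lam = Real.sqrt lam/256 := by
    norm_num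
    ring
  rw [hpow8]
  calc Real.exp (Real.sqrt lam/256) * ((n:ℝ)^2/k) * (K.choose k : ℝ)
      ≤ Real.exp (Real.sqrt lam/256) * (40*lam*((D:ℝ)*R)) * (K.choose k : ℝ) := by
        apply mul_le_mul_of_nonneg_right _ hCK0
        exact mul_le_mul_of_nonneg_left hfrac hexp0.le
    _ = ((D:ℝ)*R) * (40*lam*Real.exp (Real.sqrt lam/256) * (K.choose k : ℝ)) := by ring
    _ ≤ ((D:ℝ)*R) * (((M-2).choose m : ℝ) * (T.choose s : ℝ)) := by
        apply mul_le_mul_of_nonneg_left hBC (by positivity)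
    _ = ((myS D R M T m s).card : ℝ) := by rw [hScard]
    _ ≤ ((Lambda lam n k).ncard : ℝ) := hcount
end
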